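/- arXiv:1404.5898 — 5 statements merged into one kernel-verified Lean document; each statement's English description precedes it below -/
import Mathlib

section
/- Let M₁, M₂, M₃ be three affinely independent points in the Euclidean plane ℝ² (so that they form a nondegenerate triangle), and let M be a point in the topological interior of the convex hull of {M₁, M₂, M₃}. Then the angle ∠M₁MM₃ is strictly greater than the angle ∠M₁M₂M₃. -/
open EuclideanGeometry Real

set_option maxHeartbeats 800000 in
theorem angle_gt_of_mem_interior_triangle
    (M₁ M₂ M₃ M : EuclideanSpace ℝ (Fin 2))
    (hind : AffineIndependent ℝ ![M₁, M₂, M₃])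
    (hM : M ∈ interior (convexHull ℝ {M₁, M₂, M₃})) :
    EuclideanGeometry.angle M₁ M M₃ > EuclideanGeometry.angle M₁ M₂ M₃ := by
  -- Barycentric coordinates of `M`.
  have htop : affineSpan ℝ (Set.range ![M₁, M₂, M₃]) = ⊤ := by
    rw [hind.affineSpan_eq_top_iff_card_eq_finrank_add_one]
    simp [finrank_euclideanSpace_fin]
  set B : AffineBasis (Fin 3) ℝ (EuclideanSpace ℝ (Fin 2)) := ⟨![M₁, M₂, M₃], hind, htop⟩ with hB
  have hrange : Set.range (B : Fin 3 → EuclideanSpace ℝ (Fin 2)) = {M₁, M₂, M₃} := by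
    ext x
    simp only [hB]
    rw [show (⇑({ toFun := ![M₁, M₂, M₃], ind' := hind, tot' := htop } : AffineBasis (Fin 3) ℝ (EuclideanSpace ℝ (Fin 2)))) = ![M₁, M₂, M₃] from rfl]
    constructor
    · rintro ⟨i, rfl⟩; fin_cases i <;> simp
    · rintro (rfl | rfl | rfl)
      exacts [⟨0, rfl⟩, ⟨1, rfl⟩, ⟨2, rfl⟩]
  have hM' : ∀ i, 0 < B.coord i M := by
    rw [← Set.mem_setOf_eq (p := fun x => ∀ i, 0 < B.coord i x), ← B.interior_convexHull]
    rwa [hrange]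
  have hsum : ∑ i, B.coord i M = 1 := B.sum_coord_apply_eq_one M
  have hcomb : B.coord 0 M • M₁ + B.coord 1 M • M₂ + B.coord 2 M • M₃ = M := by
    have := B.affineCombination_coord_eq_self M
    rw [Finset.affineCombination_eq_linear_combination _ _ _ hsum, Fin.sum_univ_three] at this
    simp only [hB] at this
    rw [show (⇑({ toFun := ![M₁, M₂, M₃], ind' := hind, tot' := htop } : AffineBasis (Fin 3) ℝ (EuclideanSpace ℝ (Fin 2)))) = ![M₁, M₂, M₃] from rfl] at this
    simpa [hB] using this
  set a := B.coord 0 M with ha'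
  set b := B.coord 1 M with hb'
  set c := B.coord 2 M with hc'
  have ha : 0 < a := hM' 0
  have hb : 0 < b := hM' 1
  have hc : 0 < c := hM' 2
  have habc : a + b + c = 1 := by
    have := hsum
    rw [Fin.sum_univ_three] at this
    exact this
  clear_value B
  -- non-collinearity of the vertices
  have hncol : ¬ Collinear ℝ ({M₁, M₂, M₃} : Set (EuclideanSpace ℝ (Fin 2))) :=
    affineIndependent_iff_not_collinear_set.mp hind
  have hM₂M₃ : M₂ ≠ M₃ := by
    rintro rfl; exact hncol (by simpa using collinear_pair ℝ M₁ M₂)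
  have hM₂M₁ : M₂ ≠ M₁ := by
    rintro rfl
    refine hncol (Collinear.subset ?_ (collinear_pair ℝ M₂ M₃))
    intro x hx; simp at hx ⊢; tauto
  -- the point Q where the line M₁M meets the side M₂M₃
  have hbc : 0 < b + c := by linarith
  set t : ℝ := c / (b + c) with ht'
  have ht0 : 0 < t := div_pos hc hbc
  have ht1 : t < 1 := by rw [div_lt_one hbc]; linarith
  set Q : EuclideanSpace ℝ (Fin 2) := AffineMap.lineMap M₂ M₃ t with hQ'
  have hQ1 : Sbtw ℝ M₂ Q M₃ := sbtw_lineMap_iff.mpr ⟨hM₂M₃, ht0, ht1⟩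
  have hQspan : Q ∈ line[ℝ, M₂, M₃] := hQ1.wbtw.mem_affineSpan
  have hQcol : Collinear ℝ ({Q, M₂, M₃} : Set (EuclideanSpace ℝ (Fin 2))) :=
    (collinear_insert_iff_of_mem_affineSpan hQspan).mpr (collinear_pair ℝ M₂ M₃)
  have hM₁Q : M₁ ≠ Q := by
    rintro rfl
    exact hncol ((collinear_insert_iff_of_mem_affineSpan hQspan).mpr (collinear_pair ℝ M₂ M₃))
  -- M is strictly between M₁ and Q
  have hQval : Q = (1 - t) • M₂ + t • M₃ := by
    rw [hQ', AffineMap.lineMap_apply_module]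
  have hbct : (b + c) * t = c := by rw [ht']; field_simp
  have hbct' : (b + c) * (1 - t) = b := by
    have h' : (b + c) * (1 - t) = (b + c) - (b + c) * t := by ring
    rw [h', hbct]; ring
  have h1a : (1 : ℝ) - (b + c) = a := by linarith
  have hMQ : M = AffineMap.lineMap M₁ Q ((b : ℝ) + c) := by
    rw [AffineMap.lineMap_apply_module, hQval, ← hcomb, smul_add, smul_smul, smul_smul,
      hbct, hbct', h1a, add_assoc]
  have hS : Sbtw ℝ M₁ M Q := by
    rw [hMQ]
    exact sbtw_lineMap_iff.mpr ⟨hM₁Q, by constructor <;> [linarith; linarith]⟩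
  have hMspan : M ∈ line[ℝ, M₁, Q] := hS.wbtw.mem_affineSpan
  -- more non-collinearity
  have hcolA : ¬ Collinear ℝ ({Q, M₁, M₂} : Set (EuclideanSpace ℝ (Fin 2))) := by
    intro h
    have h' : Collinear ℝ ({M₁, Q, M₂} : Set (EuclideanSpace ℝ (Fin 2))) := by
      rwa [Set.insert_comm] at h
    have h2 : Collinear ℝ (insert M₁ ({Q, M₂, M₃} : Set (EuclideanSpace ℝ (Fin 2)))) := by
      rw [hQcol.collinear_insert_iff_of_ne (by simp : Q ∈ _) (by simp : M₂ ∈ _) hQ1.ne_left]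
      exact h'
    exact hncol (h2.subset (by intro x hx; simp at hx ⊢; tauto))
  have hcolB : ¬ Collinear ℝ ({Q, M₃, M} : Set (EuclideanSpace ℝ (Fin 2))) := by
    intro h
    have hMcol : Collinear ℝ ({M, M₁, Q} : Set (EuclideanSpace ℝ (Fin 2))) :=
      (collinear_insert_iff_of_mem_affineSpan hMspan).mpr (collinear_pair ℝ M₁ Q)
    have h' : Collinear ℝ ({M₃, M, Q} : Set (EuclideanSpace ℝ (Fin 2))) := by
      have he : ({Q, M₃, M} : Set (EuclideanSpace ℝ (Fin 2))) = {M₃, M, Q} := by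
        ext x; simp; tauto
      rwa [he] at h
    have h2 : Collinear ℝ (insert M₃ ({M, M₁, Q} : Set (EuclideanSpace ℝ (Fin 2)))) := by
      rw [hMcol.collinear_insert_iff_of_ne (by simp : M ∈ _) (by simp : Q ∈ _) hS.ne_right]
      exact h'
    have h3 : Collinear ℝ ({Q, M₁, M₃} : Set (EuclideanSpace ℝ (Fin 2))) :=
      h2.subset (by intro x hx; simp at hx ⊢; tauto)
    have h4 : Collinear ℝ (insert M₂ ({Q, M₁, M₃} : Set (EuclideanSpace ℝ (Fin 2)))) := by
      rw [h3.collinear_insert_iff_of_ne (by simp : Q ∈ _) (by simp : M₃ ∈ _) hQ1.ne_right]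
      exact hQcol.subset (by intro x hx; simp at hx ⊢; tauto)
    exact hncol (h4.subset (by intro x hx; simp at hx ⊢; tauto))
  have hQM₁ : Q ≠ M₁ := fun h => hM₁Q h.symm
  have hMM₃ : M ≠ M₃ := by
    rintro rfl
    refine hcolB (Collinear.subset ?_ (collinear_pair ℝ Q M))
    intro x hx; simp at hx ⊢; tauto
  have hQM₃ : Q ≠ M₃ := hQ1.ne_right
  -- angle identities along rays
  have hA1 : ∠ M₁ M₂ Q = ∠ M₁ M₂ M₃ := by
    have hQv : Q -ᵥ M₂ = t • (M₃ -ᵥ M₂) := by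
      rw [hQ', AffineMap.lineMap_apply, vadd_vsub]
    unfold EuclideanGeometry.angle
    rw [hQv, InnerProductGeometry.angle_smul_right_of_pos _ _ ht0]
  have hA2 : ∠ M Q M₃ = ∠ M₁ Q M₃ := by
    have hMv : M -ᵥ Q = a • (M₁ -ᵥ Q) := by
      rw [hMQ, AffineMap.lineMap_apply, vadd_vsub_assoc, ← neg_vsub_eq_vsub_rev M₁ Q,
        smul_neg, ← h1a, sub_smul, one_smul]
      abel
    unfold EuclideanGeometry.angle
    rw [hMv, InnerProductGeometry.angle_smul_left_of_pos _ _ ha]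
  -- exterior angle step at Q
  have h1 : ∠ M₁ Q M₂ + ∠ M₁ Q M₃ = π :=
    EuclideanGeometry.angle_add_angle_eq_pi_of_angle_eq_pi M₁ hQ1.angle₁₂₃_eq_pi
  have hsum1 : ∠ M₁ M₂ Q + ∠ M₂ Q M₁ + ∠ Q M₁ M₂ = π :=
    EuclideanGeometry.angle_add_angle_add_angle_eq_pi Q hM₂M₁
  have hpos1 : 0 < ∠ Q M₁ M₂ := EuclideanGeometry.angle_pos_of_not_collinear hcolA
  have hcomm1 : ∠ M₁ Q M₂ = ∠ M₂ Q M₁ := EuclideanGeometry.angle_comm _ _ _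
  have step1 : ∠ M₁ M₂ M₃ < ∠ M₁ Q M₃ := by linarith [hA1]
  -- exterior angle step at M
  have h2 : ∠ M₃ M M₁ + ∠ M₃ M Q = π :=
    EuclideanGeometry.angle_add_angle_eq_pi_of_angle_eq_pi M₃ hS.angle₁₂₃_eq_pi
  have hsum2 : ∠ M₃ M Q + ∠ M Q M₃ + ∠ Q M₃ M = π :=
    EuclideanGeometry.angle_add_angle_add_angle_eq_pi Q hMM₃
  have hpos2 : 0 < ∠ Q M₃ M := EuclideanGeometry.angle_pos_of_not_collinear hcolB
  have hcomm2 : ∠ M₁ M M₃ = ∠ M₃ M M₁ := EuclideanGeometry.angle_comm _ _ _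
  have step2 : ∠ M₁ Q M₃ < ∠ M₁ M M₃ := by linarith [hA2]
  linarith
end

section
/- Let P₁, P₂, P₃ be three affinely independent points in the Euclidean plane ℝ² such that all three interior angles of the triangle P₁P₂P₃ (namely ∠P₂P₁P₃, ∠P₁P₂P₃, ∠P₁P₃P₂) are strictly less than 2π/3. Then there exists a unique point F in the interior of the convex hull of {P₁, P₂, P₃} satisfying ∠P₁FP₂ = ∠P₂FP₃ = ∠P₃FP₁ = 2π/3. -/
open Real EuclideanGeometry
open scoped RealInnerProductSpace

variable {E : Type*} [NormedAddCommGroup E] [InnerProductSpace ℝ E]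

lemma tangent_bound (x y : E) (hx : x ≠ 0) :
    ‖x + y‖ ≤ ‖x‖ + ⟪x, y⟫ / ‖x‖ + ‖y‖ ^ 2 / (2 * ‖x‖) := by
  have hx0 : (0:ℝ) < ‖x‖ := norm_pos_iff.mpr hx
  have h2 : ‖x + y‖ ^ 2 = ‖x‖ ^ 2 + 2 * ⟪x, y⟫ + ‖y‖ ^ 2 := by
    rw [norm_add_sq_real]
  have key : ‖x + y‖ * ‖x‖ ≤ ‖x‖ ^ 2 + ⟪x, y⟫ + ‖y‖ ^ 2 / 2 := by
    nlinarith [sq_nonneg (‖x + y‖ - ‖x‖)]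
  calc ‖x + y‖ = ‖x + y‖ * ‖x‖ / ‖x‖ := by field_simp
    _ ≤ (‖x‖ ^ 2 + ⟪x, y⟫ + ‖y‖ ^ 2 / 2) / ‖x‖ := by gcongr
    _ = ‖x‖ + ⟪x, y⟫ / ‖x‖ + ‖y‖ ^ 2 / (2 * ‖x‖) := by field_simp

lemma dist_tangent (F P v : E) (hP : F ≠ P) (t : ℝ) :
    dist (F + t • v) P ≤ dist F P + t * ⟪‖F - P‖⁻¹ • (F - P), v⟫
      + t ^ 2 * ‖v‖ ^ 2 / (2 * dist F P) := by
  have h : F + t • v - P = (F - P) + t • v := by abel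
  have hFP : F - P ≠ 0 := sub_ne_zero.mpr hP
  have := tangent_bound (F - P) (t • v) hFP
  rw [dist_eq_norm, dist_eq_norm, h]
  calc ‖F - P + t • v‖ ≤ ‖F - P‖ + ⟪F - P, t • v⟫ / ‖F - P‖ + ‖t • v‖ ^ 2 / (2 * ‖F - P‖) := this
    _ = ‖F - P‖ + t * ⟪‖F - P‖⁻¹ • (F - P), v⟫ + t ^ 2 * ‖v‖ ^ 2 / (2 * ‖F - P‖) := by
        rw [real_inner_smul_right, real_inner_smul_left, norm_smul]
        simp [Real.norm_eq_abs, mul_pow, sq_abs]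
        ring
variable {E : Type*} [NormedAddCommGroup E] [InnerProductSpace ℝ E]

lemma mem_hull3 (A B C : E) {a b c : ℝ}
    (ha : 0 ≤ a) (hb : 0 ≤ b) (hc : 0 ≤ c) (habc : a + b + c = 1) :
    a • A + b • B + c • C ∈ convexHull ℝ ({A, B, C} : Set E) := by
  have hA : A ∈ convexHull ℝ ({A, B, C} : Set E) := subset_convexHull _ _ (by simp)
  have hB : B ∈ convexHull ℝ ({A, B, C} : Set E) := subset_convexHull _ _ (by simp)
  have hC : C ∈ convexHull ℝ ({A, B, C} : Set E) := subset_convexHull _ _ (by simp)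
  have hconv : Convex ℝ (convexHull ℝ ({A, B, C} : Set E)) := convex_convexHull _ _
  rcases eq_or_lt_of_le (add_nonneg hb hc) with h | h
  · have hb0 : b = 0 := by linarith [hb, hc, le_antisymm (by linarith) (add_nonneg hb hc)]
    have hc0 : c = 0 := by linarith
    have ha1 : a = 1 := by linarith
    simpa [hb0, hc0, ha1] using hA
  · set s := b + c with hs
    have hM : (b / s) • B + (c / s) • C ∈ convexHull ℝ ({A, B, C} : Set E) :=
      hconv hB hC (div_nonneg hb h.le) (div_nonneg hc h.le) (by field_simp; exact hs.symm)
    have := hconv hA hM ha (le_of_lt h) (by linarith)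
    convert this using 1
    rw [smul_add, smul_smul, smul_smul]
    field_simp
    abel

lemma unit_opposite {a b : ℝ} (e : E) (he : e ≠ 0) (ha : 0 < a) (hb : b < 0) :
    ‖a • e‖⁻¹ • (a • e) + ‖b • e‖⁻¹ • (b • e) = 0 := by
  have hne : ‖e‖ ≠ 0 := norm_ne_zero_iff.mpr he
  have h1 : ‖a • e‖ = a * ‖e‖ := by
    rw [norm_smul, Real.norm_eq_abs, abs_of_pos ha]
  have h2 : ‖b • e‖ = -b * ‖e‖ := by
    rw [norm_smul, Real.norm_eq_abs, abs_of_neg hb]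
  have hb' : b ≠ 0 := ne_of_lt hb
  rw [h1, h2, smul_smul, smul_smul, ← add_smul]
  convert zero_smul ℝ e
  field_simp
  ring

lemma vertex_improve (A B C : E) (hB : B ≠ A) (hC : C ≠ A)
    (hang : -(1/2) < ⟪B - A, C - A⟫ / (‖B - A‖ * ‖C - A‖)) :
    ∃ X ∈ convexHull ℝ ({A, B, C} : Set E),
      dist X A + dist X B + dist X C < dist A A + dist A B + dist A C := by
  have hBA : B - A ≠ 0 := sub_ne_zero.mpr hB
  have hCA : C - A ≠ 0 := sub_ne_zero.mpr hC
  have hnB : (0:ℝ) < ‖B - A‖ := norm_pos_iff.mpr hBA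
  have hnC : (0:ℝ) < ‖C - A‖ := norm_pos_iff.mpr hCA
  set u := ‖B - A‖⁻¹ • (B - A) with hu
  set w := ‖C - A‖⁻¹ • (C - A) with hw
  have hun : ‖u‖ = 1 := norm_smul_inv_norm hBA
  have hwn : ‖w‖ = 1 := norm_smul_inv_norm hCA
  have huw : ⟪u, w⟫ = ⟪B - A, C - A⟫ / (‖B - A‖ * ‖C - A‖) := by
    rw [hu, hw, real_inner_smul_left, real_inner_smul_right]
    field_simp
  set v := u + w with hv
  set s := ‖v‖ with hsdef
  have hs2 : s ^ 2 = 2 + 2 * ⟪u, w⟫ := by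
    rw [hsdef, hv, norm_add_sq_real, hun, hwn]; ring
  have hiw : -(1/2) < ⟪u, w⟫ := huw ▸ hang
  have hs1 : 1 < s := by nlinarith [norm_nonneg v, hs2, hiw]
  set K0 := s ^ 2 / (2 * dist A B) + s ^ 2 / (2 * dist A C) with hK0
  have hdAB : (0:ℝ) < dist A B := dist_pos.mpr (Ne.symm hB)
  have hdAC : (0:ℝ) < dist A C := dist_pos.mpr (Ne.symm hC)
  have hK0pos : 0 ≤ K0 := by positivity
  set r := s ^ 2 - s with hr
  have hrpos : 0 < r := by nlinarith
  set t := min ((‖B - A‖⁻¹ + ‖C - A‖⁻¹)⁻¹) (r / (K0 + 1)) with ht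
  have ht0 : 0 < t := by
    apply lt_min
    · positivity
    · positivity
  -- membership
  set α := t * ‖B - A‖⁻¹ with hα
  set β := t * ‖C - A‖⁻¹ with hβ
  have hαβ : α + β ≤ 1 := by
    have h1 : t ≤ (‖B - A‖⁻¹ + ‖C - A‖⁻¹)⁻¹ := min_le_left _ _
    have h2 : (0:ℝ) < ‖B - A‖⁻¹ + ‖C - A‖⁻¹ := by positivity
    rw [hα, hβ, ← mul_add]
    calc t * (‖B - A‖⁻¹ + ‖C - A‖⁻¹) ≤ (‖B - A‖⁻¹ + ‖C - A‖⁻¹)⁻¹ * (‖B - A‖⁻¹ + ‖C - A‖⁻¹) := by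
          gcongr
      _ = 1 := inv_mul_cancel₀ h2.ne'
  have hXrep : A + t • v = (1 - α - β) • A + α • B + β • C := by
    rw [hv, hu, hw, hα, hβ]
    module
  have hXmem : A + t • v ∈ convexHull ℝ ({A, B, C} : Set E) := by
    rw [hXrep]
    exact mem_hull3 A B C (by linarith [mul_pos ht0 (inv_pos.mpr hnB), mul_pos ht0 (inv_pos.mpr hnC)])
      (le_of_lt (mul_pos ht0 (inv_pos.mpr hnB))) (le_of_lt (mul_pos ht0 (inv_pos.mpr hnC)))
      (by ring)
  refine ⟨A + t • v, hXmem, ?_⟩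
  -- distance estimates
  have hdA : dist (A + t • v) A = t * s := by
    rw [dist_eq_norm, add_sub_cancel_left, norm_smul, Real.norm_eq_abs, abs_of_pos ht0]
  have hmB : ‖A - B‖⁻¹ • (A - B) = -u := by
    rw [hu, norm_sub_rev A B, show A - B = -(B - A) by abel, smul_neg]
  have hmC : ‖A - C‖⁻¹ • (A - C) = -w := by
    rw [hw, norm_sub_rev A C, show A - C = -(C - A) by abel, smul_neg]
  have hdB := dist_tangent A B v hB.symm t
  have hdC := dist_tangent A C v hC.symm t
  rw [hmB] at hdB
  rw [hmC] at hdC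
  have hsum : ⟪u, v⟫ + ⟪w, v⟫ = s ^ 2 := by
    rw [← inner_add_left, ← hv, real_inner_self_eq_norm_sq]
  have htK : t * K0 < r := by
    have h1 : t ≤ r / (K0 + 1) := min_le_right _ _
    calc t * K0 ≤ r / (K0 + 1) * K0 := by gcongr
      _ < r := by
          rw [div_mul_eq_mul_div, div_lt_iff₀ (by positivity)]
          nlinarith
  have hinneg : t * ⟪-u, v⟫ + t * ⟪-w, v⟫ = -(t * s ^ 2) := by
    rw [inner_neg_left, inner_neg_left]
    linear_combination (-t) * hsum
  have hvnorm : ‖v‖ ^ 2 = s ^ 2 := by rw [hsdef]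
  rw [dist_self]
  have expand : t * s + (dist A B + t * ⟪-u, v⟫ + t ^ 2 * ‖v‖ ^ 2 / (2 * dist A B))
      + (dist A C + t * ⟪-w, v⟫ + t ^ 2 * ‖v‖ ^ 2 / (2 * dist A C))
      = dist A B + dist A C + (t * s - t * s ^ 2 + t * (t * K0)) := by
    rw [hvnorm, hK0]
    linear_combination hinneg
  have hfinal : t * s - t * s ^ 2 + t * (t * K0) < 0 := by
    have h1 : t * (t * K0) < t * r := mul_lt_mul_of_pos_left htK ht0
    have h2 : t * r = t * s ^ 2 - t * s := by rw [hr]; ring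
    linarith
  calc dist (A + t • v) A + dist (A + t • v) B + dist (A + t • v) C
      ≤ t * s + (dist A B + t * ⟪-u, v⟫ + t ^ 2 * ‖v‖ ^ 2 / (2 * dist A B))
        + (dist A C + t * ⟪-w, v⟫ + t ^ 2 * ‖v‖ ^ 2 / (2 * dist A C)) :=
        add_le_add (add_le_add hdA.le hdB) hdC
    _ = dist A B + dist A C + (t * s - t * s ^ 2 + t * (t * K0)) := expand
    _ < 0 + dist A B + dist A C := by linarith
  

lemma edge_improve (A B C F : E)
    (hA : F ≠ A) (hB : F ≠ B) (hC : C ≠ F)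
    (hw0 : ‖F - A‖⁻¹ • (F - A) + ‖F - B‖⁻¹ • (F - B) = 0)
    (hFK : F ∈ convexHull ℝ ({A, B, C} : Set E)) :
    ∃ X ∈ convexHull ℝ ({A, B, C} : Set E),
      dist X A + dist X B + dist X C < dist F A + dist F B + dist F C := by
  have hCF : C - F ≠ 0 := sub_ne_zero.mpr hC
  set d := ‖C - F‖ with hd
  have hd0 : 0 < d := norm_pos_iff.mpr hCF
  set v := d⁻¹ • (C - F) with hv
  have hvn : ‖v‖ = 1 := norm_smul_inv_norm hCF
  have hdFA : 0 < dist F A := dist_pos.mpr hA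
  have hdFB : 0 < dist F B := dist_pos.mpr hB
  set K0 := 1 / (2 * dist F A) + 1 / (2 * dist F B) with hK0
  have hK0pos : 0 ≤ K0 := by positivity
  set t := min d (K0 + 1)⁻¹ with ht
  have ht0 : 0 < t := lt_min hd0 (by positivity)
  have htd : t ≤ d := min_le_left _ _
  have htK : t * K0 < 1 := by
    have h1 : t ≤ (K0 + 1)⁻¹ := min_le_right _ _
    calc t * K0 ≤ (K0 + 1)⁻¹ * K0 := by gcongr
      _ = K0 / (K0 + 1) := by rw [inv_mul_eq_div]
      _ < 1 := (div_lt_one (by positivity)).mpr (lt_add_one K0)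
  have hCmem : C ∈ convexHull ℝ ({A, B, C} : Set E) := subset_convexHull _ _ (by simp)
  have hconv : Convex ℝ (convexHull ℝ ({A, B, C} : Set E)) := convex_convexHull _ _
  have hXrep : F + t • v = (1 - t / d) • F + (t / d) • C := by
    rw [hv, div_eq_mul_inv]
    module
  have hXmem : F + t • v ∈ convexHull ℝ ({A, B, C} : Set E) := by
    rw [hXrep]
    have ha : (0:ℝ) ≤ 1 - t / d := by
      rw [sub_nonneg]
      exact (div_le_one hd0).mpr htd
    exact hconv hFK hCmem ha (by positivity) (by ring)
  refine ⟨F + t • v, hXmem, ?_⟩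
  have hdC : dist (F + t • v) C = d - t := by
    have h1 : F + t • v - C = (t * d⁻¹ - 1) • (C - F) := by
      rw [hv]; module
    have h2 : t * d⁻¹ - 1 ≤ 0 := by
      rw [sub_nonpos, ← div_eq_mul_inv]
      exact (div_le_one hd0).mpr htd
    rw [dist_eq_norm, h1, norm_smul, Real.norm_eq_abs, abs_of_nonpos h2, ← hd]
    field_simp
    ring
  have hdA := dist_tangent F A v hA t
  have hdB := dist_tangent F B v hB t
  have hFC : dist F C = d := by rw [dist_eq_norm, ← norm_neg, hd]; congr 1; abel
  have hinner : t * ⟪‖F - A‖⁻¹ • (F - A), v⟫ + t * ⟪‖F - B‖⁻¹ • (F - B), v⟫ = 0 := by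
    have : ⟪‖F - A‖⁻¹ • (F - A), v⟫ + ⟪‖F - B‖⁻¹ • (F - B), v⟫ = 0 := by
      rw [← inner_add_left, hw0, inner_zero_left]
    linear_combination t * this
  have hfinal : t ^ 2 * K0 - t < 0 := by nlinarith
  calc dist (F + t • v) A + dist (F + t • v) B + dist (F + t • v) C
      ≤ (dist F A + t * ⟪‖F - A‖⁻¹ • (F - A), v⟫ + t ^ 2 * ‖v‖ ^ 2 / (2 * dist F A))
        + (dist F B + t * ⟪‖F - B‖⁻¹ • (F - B), v⟫ + t ^ 2 * ‖v‖ ^ 2 / (2 * dist F B))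
        + (d - t) := add_le_add (add_le_add hdA hdB) hdC.le
    _ = dist F A + dist F B + d + (t ^ 2 * K0 - t) := by
        rw [hvn, hK0]
        linear_combination hinner
    _ < dist F A + dist F B + dist F C := by rw [hFC]; linarith

lemma min_interior_grad (A B C F : E) (hA : F ≠ A) (hB : F ≠ B) (hC : F ≠ C)
    (hint : F ∈ interior (convexHull ℝ ({A, B, C} : Set E)))
    (hmin : IsMinOn (fun X => dist X A + dist X B + dist X C)
      (convexHull ℝ ({A, B, C} : Set E)) F) :
    ‖F - A‖⁻¹ • (F - A) + ‖F - B‖⁻¹ • (F - B) + ‖F - C‖⁻¹ • (F - C) = 0 := by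
  by_contra hS
  set S := ‖F - A‖⁻¹ • (F - A) + ‖F - B‖⁻¹ • (F - B) + ‖F - C‖⁻¹ • (F - C) with hSdef
  have hSpos : 0 < ‖S‖ := norm_pos_iff.mpr hS
  set v := -(‖S‖⁻¹ • S) with hv
  have hvn : ‖v‖ = 1 := by rw [hv, norm_neg]; exact norm_smul_inv_norm hS
  obtain ⟨ε, hε, hball⟩ := Metric.mem_nhds_iff.mp (mem_interior_iff_mem_nhds.mp hint)
  have hdFA : 0 < dist F A := dist_pos.mpr hA
  have hdFB : 0 < dist F B := dist_pos.mpr hB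
  have hdFC : 0 < dist F C := dist_pos.mpr hC
  set K0 := 1 / (2 * dist F A) + 1 / (2 * dist F B) + 1 / (2 * dist F C) with hK0
  have hK0pos : 0 ≤ K0 := by positivity
  set t := min (ε / 2) (‖S‖ / (K0 + 1)) with ht
  have ht0 : 0 < t := lt_min (by positivity) (by positivity)
  have hXball : F + t • v ∈ Metric.ball F ε := by
    rw [Metric.mem_ball, dist_eq_norm, add_sub_cancel_left, norm_smul, Real.norm_eq_abs,
      abs_of_pos ht0, hvn, mul_one]
    calc t ≤ ε / 2 := min_le_left _ _
      _ < ε := by linarith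
  have hXK := hball hXball
  have hge := hmin hXK
  simp only [Set.mem_setOf_eq] at hge
  have hdA := dist_tangent F A v hA t
  have hdB := dist_tangent F B v hB t
  have hdC := dist_tangent F C v hC t
  have hinner : ⟪‖F - A‖⁻¹ • (F - A), v⟫ + ⟪‖F - B‖⁻¹ • (F - B), v⟫
      + ⟪‖F - C‖⁻¹ • (F - C), v⟫ = -‖S‖ := by
    rw [← inner_add_left, ← inner_add_left, ← hSdef, hv, inner_neg_right, real_inner_smul_right,
      real_inner_self_eq_norm_sq]
    field_simp
  have htK : t * K0 < ‖S‖ := by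
    have h1 : t ≤ ‖S‖ / (K0 + 1) := min_le_right _ _
    calc t * K0 ≤ ‖S‖ / (K0 + 1) * K0 := by gcongr
      _ < ‖S‖ := by
          rw [div_mul_eq_mul_div, div_lt_iff₀ (by positivity)]
          nlinarith
  have hup : dist (F + t • v) A + dist (F + t • v) B + dist (F + t • v) C
      ≤ dist F A + dist F B + dist F C - t * ‖S‖ + t ^ 2 * K0 := by
    calc dist (F + t • v) A + dist (F + t • v) B + dist (F + t • v) C
        ≤ (dist F A + t * ⟪‖F - A‖⁻¹ • (F - A), v⟫ + t ^ 2 * ‖v‖ ^ 2 / (2 * dist F A))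
          + (dist F B + t * ⟪‖F - B‖⁻¹ • (F - B), v⟫ + t ^ 2 * ‖v‖ ^ 2 / (2 * dist F B))
          + (dist F C + t * ⟪‖F - C‖⁻¹ • (F - C), v⟫ + t ^ 2 * ‖v‖ ^ 2 / (2 * dist F C)) :=
          add_le_add (add_le_add hdA hdB) hdC
      _ = dist F A + dist F B + dist F C - t * ‖S‖ + t ^ 2 * K0 := by
          rw [hvn, hK0]
          linear_combination t * hinner
  nlinarith [mul_lt_mul_of_pos_left htK ht0]

lemma angle_to_inner {x y : E} (hx : x ≠ 0) (hy : y ≠ 0)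
    (h : InnerProductGeometry.angle x y = 2 * π / 3) :
    ⟪‖x‖⁻¹ • x, ‖y‖⁻¹ • y⟫ = -(1/2) := by
  have hc := InnerProductGeometry.cos_angle x y
  rw [h] at hc
  have hcos : Real.cos (2 * π / 3) = -(1/2) := by
    rw [show (2*π/3:ℝ) = π - π/3 by ring, Real.cos_pi_sub, Real.cos_pi_div_three]
  rw [hcos] at hc
  have hnx : (0:ℝ) < ‖x‖ := norm_pos_iff.mpr hx
  have hny : (0:ℝ) < ‖y‖ := norm_pos_iff.mpr hy
  rw [real_inner_smul_left, real_inner_smul_right]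
  field_simp at hc ⊢
  linarith

lemma unit_sum_zero (w₁ w₂ w₃ : E) (h1 : ‖w₁‖ = 1) (h2 : ‖w₂‖ = 1) (h3 : ‖w₃‖ = 1)
    (h12 : ⟪w₁, w₂⟫ = -(1/2)) (h13 : ⟪w₁, w₃⟫ = -(1/2)) (h23 : ⟪w₂, w₃⟫ = -(1/2)) :
    w₁ + w₂ + w₃ = 0 := by
  have e : ⟪w₁ + w₂ + w₃, w₁ + w₂ + w₃⟫ = ‖w₁‖^2 + ‖w₂‖^2 + ‖w₃‖^2
      + 2*⟪w₁,w₂⟫ + 2*⟪w₁,w₃⟫ + 2*⟪w₂,w₃⟫ := by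
    simp only [inner_add_left, inner_add_right, real_inner_self_eq_norm_sq,
      real_inner_comm w₂ w₁, real_inner_comm w₃ w₁, real_inner_comm w₃ w₂]
    ring
  rw [h1, h2, h3, h12, h13, h23] at e
  norm_num at e
  exact e

lemma dist_ge (Y P X : E) (hYP : Y ≠ P) :
    dist Y P + ⟪Y - X, ‖P - Y‖⁻¹ • (P - Y)⟫ ≤ dist X P := by
  have hPY : P - Y ≠ 0 := sub_ne_zero.mpr (Ne.symm hYP)
  have hn : (0:ℝ) < ‖P - Y‖ := norm_pos_iff.mpr hPY
  set w := ‖P - Y‖⁻¹ • (P - Y) with hw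
  have hwn : ‖w‖ = 1 := norm_smul_inv_norm hPY
  have h1 : ⟪P - X, w⟫ ≤ dist X P := by
    calc ⟪P - X, w⟫ ≤ ‖P - X‖ * ‖w‖ := real_inner_le_norm _ _
      _ = dist X P := by rw [hwn, mul_one, dist_eq_norm, norm_sub_rev]
  have h2 : ⟪P - X, w⟫ = dist Y P + ⟪Y - X, w⟫ := by
    have : P - X = (P - Y) + (Y - X) := by abel
    have hn' : ‖Y - P‖ ≠ 0 := by rw [norm_sub_rev]; exact hn.ne'
    rw [this, inner_add_left, hw, real_inner_smul_right, real_inner_self_eq_norm_sq,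
      dist_eq_norm, norm_sub_rev]
    field_simp
  linarith

lemma fermat_facts (P₁ P₂ P₃ Z : E) (h1 : Z ≠ P₁) (h2 : Z ≠ P₂) (h3 : Z ≠ P₃)
    (a12 : InnerProductGeometry.angle (P₁ - Z) (P₂ - Z) = 2 * π / 3)
    (a23 : InnerProductGeometry.angle (P₂ - Z) (P₃ - Z) = 2 * π / 3)
    (a31 : InnerProductGeometry.angle (P₃ - Z) (P₁ - Z) = 2 * π / 3) :
    (∀ X : E, dist Z P₁ + dist Z P₂ + dist Z P₃ ≤ dist X P₁ + dist X P₂ + dist X P₃)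
    ∧ ⟪‖P₁ - Z‖⁻¹ • (P₁ - Z), ‖P₂ - Z‖⁻¹ • (P₂ - Z)⟫ = -(1/2) := by
  have hn1 : P₁ - Z ≠ 0 := sub_ne_zero.mpr (Ne.symm h1)
  have hn2 : P₂ - Z ≠ 0 := sub_ne_zero.mpr (Ne.symm h2)
  have hn3 : P₃ - Z ≠ 0 := sub_ne_zero.mpr (Ne.symm h3)
  set w₁ := ‖P₁ - Z‖⁻¹ • (P₁ - Z) with hw₁
  set w₂ := ‖P₂ - Z‖⁻¹ • (P₂ - Z) with hw₂
  set w₃ := ‖P₃ - Z‖⁻¹ • (P₃ - Z) with hw₃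
  have i12 : ⟪w₁, w₂⟫ = -(1/2) := angle_to_inner hn1 hn2 a12
  have i23 : ⟪w₂, w₃⟫ = -(1/2) := angle_to_inner hn2 hn3 a23
  have i13 : ⟪w₁, w₃⟫ = -(1/2) := by
    rw [real_inner_comm]; exact angle_to_inner hn3 hn1 a31
  have hsum : w₁ + w₂ + w₃ = 0 :=
    unit_sum_zero w₁ w₂ w₃ (norm_smul_inv_norm hn1) (norm_smul_inv_norm hn2)
      (norm_smul_inv_norm hn3) i12 i13 i23
  refine ⟨fun X => ?_, i12⟩
  have g1 := dist_ge Z P₁ X h1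
  have g2 := dist_ge Z P₂ X h2
  have g3 := dist_ge Z P₃ X h3
  have hz : ⟪Z - X, w₁⟫ + ⟪Z - X, w₂⟫ + ⟪Z - X, w₃⟫ = 0 := by
    rw [← inner_add_right, ← inner_add_right, hsum, inner_zero_right]
  linarith

lemma fermat_unique (P₁ P₂ P₃ F F' : E)
    (hF1 : F ≠ P₁) (hF2 : F ≠ P₂) (hF3 : F ≠ P₃)
    (hG1 : F' ≠ P₁) (hG2 : F' ≠ P₂) (hG3 : F' ≠ P₃)
    (a12 : InnerProductGeometry.angle (P₁ - F) (P₂ - F) = 2 * π / 3)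
    (a23 : InnerProductGeometry.angle (P₂ - F) (P₃ - F) = 2 * π / 3)
    (a31 : InnerProductGeometry.angle (P₃ - F) (P₁ - F) = 2 * π / 3)
    (b12 : InnerProductGeometry.angle (P₁ - F') (P₂ - F') = 2 * π / 3)
    (b23 : InnerProductGeometry.angle (P₂ - F') (P₃ - F') = 2 * π / 3)
    (b31 : InnerProductGeometry.angle (P₃ - F') (P₁ - F') = 2 * π / 3) :
    F = F' := by
  by_contra hne
  obtain ⟨hminF, i12⟩ := fermat_facts P₁ P₂ P₃ F hF1 hF2 hF3 a12 a23 a31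
  obtain ⟨hminG, _⟩ := fermat_facts P₁ P₂ P₃ F' hG1 hG2 hG3 b12 b23 b31
  have heq : dist F P₁ + dist F P₂ + dist F P₃ = dist F' P₁ + dist F' P₂ + dist F' P₃ :=
    le_antisymm (hminF F') (hminG F)
  have hn1 : P₁ - F ≠ 0 := sub_ne_zero.mpr (Ne.symm hF1)
  have hn2 : P₂ - F ≠ 0 := sub_ne_zero.mpr (Ne.symm hF2)
  have hn3 : P₃ - F ≠ 0 := sub_ne_zero.mpr (Ne.symm hF3)
  set w₁ := ‖P₁ - F‖⁻¹ • (P₁ - F) with hw₁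
  set w₂ := ‖P₂ - F‖⁻¹ • (P₂ - F) with hw₂
  set w₃ := ‖P₃ - F‖⁻¹ • (P₃ - F) with hw₃
  have hsum0 : ⟪F - F', w₁⟫ + ⟪F - F', w₂⟫ + ⟪F - F', w₃⟫ = 0 := by
    have i23 : ⟪w₂, w₃⟫ = -(1/2) := angle_to_inner hn2 hn3 a23
    have i13 : ⟪w₁, w₃⟫ = -(1/2) := by
      rw [real_inner_comm]; exact angle_to_inner hn3 hn1 a31
    have hsum : w₁ + w₂ + w₃ = 0 :=
      unit_sum_zero w₁ w₂ w₃ (norm_smul_inv_norm hn1) (norm_smul_inv_norm hn2)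
        (norm_smul_inv_norm hn3) i12 i13 i23
    rw [← inner_add_right, ← inner_add_right, hsum, inner_zero_right]
  have g1 := dist_ge F P₁ F' hF1
  have g2 := dist_ge F P₂ F' hF2
  have g3 := dist_ge F P₃ F' hF3
  rw [← hw₁] at g1
  rw [← hw₂] at g2
  rw [← hw₃] at g3
  -- each inequality is an equality
  have e1 : dist F P₁ + ⟪F - F', w₁⟫ = dist F' P₁ := by linarith
  have e2 : dist F P₂ + ⟪F - F', w₂⟫ = dist F' P₂ := by linarith
  -- convert to Cauchy-Schwarz equality
  have cauchy : ∀ (P : E) (w : E), P - F ≠ 0 → w = ‖P - F‖⁻¹ • (P - F) →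
      dist F P + ⟪F - F', w⟫ = dist F' P → P - F' = ‖P - F'‖ • w := by
    intro P w hnP hwdef he
    have hwn : ‖w‖ = 1 := hwdef ▸ norm_smul_inv_norm hnP
    have hPFw : ⟪P - F, w⟫ = dist F P := by
      rw [hwdef, real_inner_smul_right, real_inner_self_eq_norm_sq, dist_eq_norm, norm_sub_rev]
      have h0 : ‖P - F‖ ≠ 0 := norm_ne_zero_iff.mpr hnP
      rw [norm_sub_rev P F] at h0
      field_simp
    have hinner : ⟪P - F', w⟫ = ‖P - F'‖ * ‖w‖ := by
      have hsplit : ⟪P - F', w⟫ = ⟪P - F, w⟫ + ⟪F - F', w⟫ := by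
        rw [← inner_add_left]; congr 1; abel
      rw [hsplit, hPFw, he, hwn, mul_one, dist_eq_norm, norm_sub_rev]
    have := inner_eq_norm_mul_iff_real.mp hinner
    rwa [hwn, one_smul] at this
  have c1 := cauchy P₁ w₁ hn1 hw₁ e1
  have c2 := cauchy P₂ w₂ hn2 hw₂ e2
  have d1 : P₁ - F = ‖P₁ - F‖ • w₁ := by
    rw [hw₁, smul_smul, mul_inv_cancel₀ (norm_ne_zero_iff.mpr hn1), one_smul]
  have d2 : P₂ - F = ‖P₂ - F‖ • w₂ := by
    rw [hw₂, smul_smul, mul_inv_cancel₀ (norm_ne_zero_iff.mpr hn2), one_smul]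
  set α := ‖P₁ - F'‖ - ‖P₁ - F‖ with hα
  set β := ‖P₂ - F'‖ - ‖P₂ - F‖ with hβ
  have f1 : F - F' = α • w₁ := by
    rw [hα, sub_smul, ← c1, ← d1]; abel
  have f2 : F - F' = β • w₂ := by
    rw [hβ, sub_smul, ← c2, ← d2]; abel
  have hFF : F - F' ≠ 0 := sub_ne_zero.mpr hne
  have hαne : α ≠ 0 := by
    intro h; rw [h, zero_smul] at f1; exact hFF f1
  have hβne : β ≠ 0 := by
    intro h; rw [h, zero_smul] at f2; exact hFF f2
  have hw1n : ‖w₁‖ = 1 := norm_smul_inv_norm hn1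
  have hw2n : ‖w₂‖ = 1 := norm_smul_inv_norm hn2
  have q1 : ⟪F - F', F - F'⟫ = α ^ 2 := by
    rw [f1, real_inner_smul_left, real_inner_smul_right, real_inner_self_eq_norm_sq, hw1n]
    ring
  have q2 : ⟪F - F', F - F'⟫ = β ^ 2 := by
    rw [f2, real_inner_smul_left, real_inner_smul_right, real_inner_self_eq_norm_sq, hw2n]
    ring
  have q12 : ⟪F - F', F - F'⟫ = α * β * -(1/2) := by
    have step : ⟪F - F', F - F'⟫ = ⟪α • w₁, β • w₂⟫ := by rw [← f1, ← f2]
    rw [step, real_inner_smul_left, real_inner_smul_right, i12]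
    ring
  have eα : α ^ 2 = α * β * -(1/2) := q1.symm.trans q12
  have eβ : β ^ 2 = α * β * -(1/2) := q2.symm.trans q12
  have h4 : α ^ 2 * β ^ 2 = (α * β * -(1/2)) * (α * β * -(1/2)) := by rw [eα, eβ]
  have h5 : (α * β) ^ 2 = 0 := by linear_combination (4/3) * h4
  have h6 : α * β = 0 := by
    exact pow_eq_zero_iff (two_ne_zero) |>.mp h5
  rcases mul_eq_zero.mp h6 with h | h
  · exact hαne h
  · exact hβne h

lemma angle_lt_inner {x y : E} (hx : x ≠ 0) (hy : y ≠ 0)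
    (h : InnerProductGeometry.angle x y < 2 * π / 3) :
    -(1/2) < ⟪x, y⟫ / (‖x‖ * ‖y‖) := by
  have hc := InnerProductGeometry.cos_angle x y
  have hmono : Real.cos (2 * π / 3) < Real.cos (InnerProductGeometry.angle x y) := by
    apply Real.strictAntiOn_cos
    · exact ⟨InnerProductGeometry.angle_nonneg x y, InnerProductGeometry.angle_le_pi x y⟩
    · constructor
      · positivity
      · linarith [Real.pi_pos]
    · exact h
  have hcos : Real.cos (2 * π / 3) = -(1/2) := by
    rw [show (2*π/3:ℝ) = π - π/3 by ring, Real.cos_pi_sub, Real.cos_pi_div_three]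
  rw [hcos, hc] at hmono
  exact hmono

lemma inner_to_angle {x y : E} (hx : x ≠ 0) (hy : y ≠ 0)
    (h : ⟪‖x‖⁻¹ • x, ‖y‖⁻¹ • y⟫ = -(1/2)) :
    InnerProductGeometry.angle x y = 2 * π / 3 := by
  have hnx : (0:ℝ) < ‖x‖ := norm_pos_iff.mpr hx
  have hny : (0:ℝ) < ‖y‖ := norm_pos_iff.mpr hy
  rw [real_inner_smul_left, real_inner_smul_right] at h
  have hq : ⟪x, y⟫ / (‖x‖ * ‖y‖) = -(1/2) := by
    field_simp at h ⊢
    linarith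
  rw [InnerProductGeometry.angle, hq, Real.arccos_neg,
    show (1/2:ℝ) = Real.cos (π/3) from Real.cos_pi_div_three.symm,
    Real.arccos_cos (by positivity) (by linarith [Real.pi_pos])]
  ring

lemma neg_unit (a b : E) : ‖a - b‖⁻¹ • (a - b) = -(‖b - a‖⁻¹ • (b - a)) := by
  rw [norm_sub_rev, show a - b = -(b - a) by abel, smul_neg]

lemma eg_angle (A B C : EuclideanSpace ℝ (Fin 2)) :
    EuclideanGeometry.angle A B C = InnerProductGeometry.angle (A - B) (C - B) := by
  rw [EuclideanGeometry.angle, vsub_eq_sub, vsub_eq_sub]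

set_option maxHeartbeats 2000000 in
theorem existsUnique_interior_point_with_angles_two_pi_div_three
    (P₁ P₂ P₃ : EuclideanSpace ℝ (Fin 2))
    (hind : AffineIndependent ℝ ![P₁, P₂, P₃])
    (h₁ : EuclideanGeometry.angle P₂ P₁ P₃ < 2 * π / 3)
    (h₂ : EuclideanGeometry.angle P₁ P₂ P₃ < 2 * π / 3)
    (h₃ : EuclideanGeometry.angle P₁ P₃ P₂ < 2 * π / 3) :
    ∃! F : EuclideanSpace ℝ (Fin 2),
      F ∈ interior (convexHull ℝ {P₁, P₂, P₃}) ∧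
      EuclideanGeometry.angle P₁ F P₂ = 2 * π / 3 ∧
      EuclideanGeometry.angle P₂ F P₃ = 2 * π / 3 ∧
      EuclideanGeometry.angle P₃ F P₁ = 2 * π / 3 := by
  -- distinctness
  have hinj := hind.injective
  have hne12 : P₁ ≠ P₂ := fun h => by
    have : (0 : Fin 3) = 1 := hinj (by simpa using h)
    exact absurd this (by decide)
  have hne13 : P₁ ≠ P₃ := fun h => by
    have : (0 : Fin 3) = 2 := hinj (by simpa using h)
    exact absurd this (by decide)
  have hne23 : P₂ ≠ P₃ := fun h => by
    have : (1 : Fin 3) = 2 := hinj (by simpa using h)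
    exact absurd this (by decide)
  have hs12 : P₁ - P₂ ≠ 0 := sub_ne_zero.mpr hne12
  have hs21 : P₂ - P₁ ≠ 0 := sub_ne_zero.mpr hne12.symm
  have hs13 : P₁ - P₃ ≠ 0 := sub_ne_zero.mpr hne13
  have hs31 : P₃ - P₁ ≠ 0 := sub_ne_zero.mpr hne13.symm
  have hs23 : P₂ - P₃ ≠ 0 := sub_ne_zero.mpr hne23
  have hs32 : P₃ - P₂ ≠ 0 := sub_ne_zero.mpr hne23.symm
  -- affine basis
  have htop : affineSpan ℝ (Set.range ![P₁, P₂, P₃]) = ⊤ := by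
    rw [hind.affineSpan_eq_top_iff_card_eq_finrank_add_one]
    simp [finrank_euclideanSpace_fin]
  let b : AffineBasis (Fin 3) ℝ (EuclideanSpace ℝ (Fin 2)) := ⟨![P₁, P₂, P₃], hind, htop⟩
  have hb0 : b 0 = P₁ := rfl
  have hb1 : b 1 = P₂ := rfl
  have hb2 : b 2 = P₃ := rfl
  have hrangeb : Set.range (b : Fin 3 → EuclideanSpace ℝ (Fin 2)) = {P₁, P₂, P₃} := by
    have hcoe : (b : Fin 3 → EuclideanSpace ℝ (Fin 2)) = ![P₁, P₂, P₃] := rfl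
    rw [hcoe]
    ext z
    constructor
    · rintro ⟨i, rfl⟩
      fin_cases i <;> simp
    · intro hz
      simp only [Set.mem_insert_iff, Set.mem_singleton_iff] at hz
      rcases hz with h | h | h
      · exact ⟨0, h.symm⟩
      · exact ⟨1, h.symm⟩
      · exact ⟨2, h.symm⟩
  set K := convexHull ℝ ({P₁, P₂, P₃} : Set (EuclideanSpace ℝ (Fin 2))) with hK
  -- minimizer
  have hKcpt : IsCompact K := (Set.toFinite _).isCompact_convexHull (𝕜 := ℝ)
  have hKne : K.Nonempty := ⟨P₁, subset_convexHull _ _ (by simp)⟩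
  have hgc : Continuous (fun X : EuclideanSpace ℝ (Fin 2) => dist X P₁ + dist X P₂ + dist X P₃) := by
    continuity
  obtain ⟨F, hFK, hmin⟩ := hKcpt.exists_isMinOn hKne hgc.continuousOn
  have hminle : ∀ X ∈ K, dist F P₁ + dist F P₂ + dist F P₃ ≤ dist X P₁ + dist X P₂ + dist X P₃ :=
    fun X hX => hmin hX
  -- angle hypotheses in inner-product form
  have hv₁ : -(1/2) < ⟪P₂ - P₁, P₃ - P₁⟫ / (‖P₂ - P₁‖ * ‖P₃ - P₁‖) :=
    angle_lt_inner hs21 hs31 (by rw [← eg_angle]; exact h₁)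
  have hv₂ : -(1/2) < ⟪P₁ - P₂, P₃ - P₂⟫ / (‖P₁ - P₂‖ * ‖P₃ - P₂‖) :=
    angle_lt_inner hs12 hs32 (by rw [← eg_angle]; exact h₂)
  have hv₃ : -(1/2) < ⟪P₁ - P₃, P₂ - P₃⟫ / (‖P₁ - P₃‖ * ‖P₂ - P₃‖) :=
    angle_lt_inner hs13 hs23 (by rw [← eg_angle]; exact h₃)
  -- F is not a vertex
  have hvert1 : F ≠ P₁ := by
    intro h
    obtain ⟨X, hXK, hlt⟩ := vertex_improve P₁ P₂ P₃ hne12.symm hne13.symm hv₁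
    have := hminle X hXK
    rw [h] at this
    linarith
  have hvert2 : F ≠ P₂ := by
    intro h
    obtain ⟨X, hXK, hlt⟩ := vertex_improve P₂ P₁ P₃ hne12 hne23.symm hv₂
    rw [show ({P₂, P₁, P₃} : Set (EuclideanSpace ℝ (Fin 2))) = {P₁, P₂, P₃} from
      Set.insert_comm _ _ _] at hXK
    have := hminle X hXK
    rw [h] at this
    linarith [dist_comm P₂ P₁]
  have hvert3 : F ≠ P₃ := by
    intro h
    obtain ⟨X, hXK, hlt⟩ := vertex_improve P₃ P₁ P₂ hne13 hne23 hv₃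
    rw [show ({P₃, P₁, P₂} : Set (EuclideanSpace ℝ (Fin 2))) = {P₁, P₂, P₃} by
      ext z; simp; tauto] at hXK
    have := hminle X hXK
    rw [h] at this
    linarith
  -- coordinates
  have hsum : b.coord 0 F + b.coord 1 F + b.coord 2 F = 1 := by
    have := b.sum_coord_apply_eq_one F
    rwa [Fin.sum_univ_three] at this
  have hcomb : b.coord 0 F • P₁ + b.coord 1 F • P₂ + b.coord 2 F • P₃ = F := by
    have := b.linear_combination_coord_eq_self F
    rwa [Fin.sum_univ_three, hb0, hb1, hb2] at this
  have hcnonneg : ∀ i, 0 ≤ b.coord i F := by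
    have h := hFK
    rw [hK, ← hrangeb, b.convexHull_eq_nonneg_coord] at h
    exact h
  have hcn0 := hcnonneg 0
  have hcn1 := hcnonneg 1
  have hcn2 := hcnonneg 2
  obtain ⟨c0, hc0d⟩ : ∃ x, (b.coord 0) F = x := ⟨_, rfl⟩
  obtain ⟨c1, hc1d⟩ : ∃ x, (b.coord 1) F = x := ⟨_, rfl⟩
  obtain ⟨c2, hc2d⟩ : ∃ x, (b.coord 2) F = x := ⟨_, rfl⟩
  rw [hc0d] at hcn0
  rw [hc1d] at hcn1
  rw [hc2d] at hcn2
  rw [hc0d, hc1d, hc2d] at hsum hcomb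
  -- edge exclusions
  have hedgeC : c2 = 0 → False := by
    intro h2
    have h0pos : 0 < c0 := by
      rcases (hcn0).lt_or_eq with h | h
      · exact h
      · exfalso
        have hc1 : c1 = 1 := by linarith
        rw [h.symm, h2, hc1] at hcomb
        simp at hcomb
        exact hvert2 hcomb.symm
    have h1pos : 0 < c1 := by
      rcases (hcn1).lt_or_eq with h | h
      · exact h
      · exfalso
        have hc0 : c0 = 1 := by linarith
        rw [h.symm, h2, hc0] at hcomb
        simp at hcomb
        exact hvert1 hcomb.symm
    have hF1 : F - P₁ = c1 • (P₂ - P₁) := by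
      have hc0e : c0 = 1 - c1 := by linarith
      rw [← hcomb, hc0e, h2]
      module
    have hF2 : F - P₂ = (-c0) • (P₂ - P₁) := by
      have hc1e : c1 = 1 - c0 := by linarith
      rw [← hcomb, hc1e, h2]
      module
    have hw0 : ‖F - P₁‖⁻¹ • (F - P₁) + ‖F - P₂‖⁻¹ • (F - P₂) = 0 := by
      rw [hF1, hF2]
      exact unit_opposite (P₂ - P₁) hs21 h1pos (neg_lt_zero.mpr h0pos)
    obtain ⟨X, hXK, hlt⟩ := edge_improve P₁ P₂ P₃ F hvert1 hvert2 (Ne.symm hvert3) hw0 hFK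
    have := hminle X hXK
    linarith
  have hedgeA : c0 = 0 → False := by
    intro h0
    have h1pos : 0 < c1 := by
      rcases (hcn1).lt_or_eq with h | h
      · exact h
      · exfalso
        have hc2 : c2 = 1 := by linarith
        rw [h.symm, h0, hc2] at hcomb
        simp at hcomb
        exact hvert3 hcomb.symm
    have h2pos : 0 < c2 := by
      rcases (hcn2).lt_or_eq with h | h
      · exact h
      · exfalso
        have hc1 : c1 = 1 := by linarith
        rw [h.symm, h0, hc1] at hcomb
        simp at hcomb
        exact hvert2 hcomb.symm
    have hF2 : F - P₂ = c2 • (P₃ - P₂) := by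
      have hc1e : c1 = 1 - c2 := by linarith
      rw [← hcomb, hc1e, h0]
      module
    have hF3 : F - P₃ = (-c1) • (P₃ - P₂) := by
      have hc2e : c2 = 1 - c1 := by linarith
      rw [← hcomb, hc2e, h0]
      module
    have hw0 : ‖F - P₂‖⁻¹ • (F - P₂) + ‖F - P₃‖⁻¹ • (F - P₃) = 0 := by
      rw [hF2, hF3]
      exact unit_opposite (P₃ - P₂) hs32 h2pos (neg_lt_zero.mpr h1pos)
    have hset : ({P₂, P₃, P₁} : Set (EuclideanSpace ℝ (Fin 2))) = {P₁, P₂, P₃} := by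
      ext z; simp; tauto
    have hFK2 : F ∈ convexHull ℝ ({P₂, P₃, P₁} : Set (EuclideanSpace ℝ (Fin 2))) := by
      rw [hset]; exact hFK
    obtain ⟨X, hXK, hlt⟩ := edge_improve P₂ P₃ P₁ F hvert2 hvert3 (Ne.symm hvert1) hw0 hFK2
    rw [hset] at hXK
    have := hminle X hXK
    linarith
  have hedgeB : c1 = 0 → False := by
    intro h1
    have h0pos : 0 < c0 := by
      rcases (hcn0).lt_or_eq with h | h
      · exact h
      · exfalso
        have hc2 : c2 = 1 := by linarith
        rw [h.symm, h1, hc2] at hcomb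
        simp at hcomb
        exact hvert3 hcomb.symm
    have h2pos : 0 < c2 := by
      rcases (hcn2).lt_or_eq with h | h
      · exact h
      · exfalso
        have hc0 : c0 = 1 := by linarith
        rw [h.symm, h1, hc0] at hcomb
        simp at hcomb
        exact hvert1 hcomb.symm
    have hF1 : F - P₁ = c2 • (P₃ - P₁) := by
      have hc0e : c0 = 1 - c2 := by linarith
      rw [← hcomb, hc0e, h1]
      module
    have hF3 : F - P₃ = (-c0) • (P₃ - P₁) := by
      have hc2e : c2 = 1 - c0 := by linarith
      rw [← hcomb, hc2e, h1]
      module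
    have hw0 : ‖F - P₁‖⁻¹ • (F - P₁) + ‖F - P₃‖⁻¹ • (F - P₃) = 0 := by
      rw [hF1, hF3]
      exact unit_opposite (P₃ - P₁) hs31 h2pos (neg_lt_zero.mpr h0pos)
    have hset : ({P₁, P₃, P₂} : Set (EuclideanSpace ℝ (Fin 2))) = {P₁, P₂, P₃} := by
      ext z; simp; tauto
    have hFK2 : F ∈ convexHull ℝ ({P₁, P₃, P₂} : Set (EuclideanSpace ℝ (Fin 2))) := by
      rw [hset]; exact hFK
    obtain ⟨X, hXK, hlt⟩ := edge_improve P₁ P₃ P₂ F hvert1 hvert3 (Ne.symm hvert2) hw0 hFK2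
    rw [hset] at hXK
    have := hminle X hXK
    linarith
  have hpos0 : 0 < c0 := lt_of_le_of_ne (hcn0) (fun h => hedgeA h.symm)
  have hpos1 : 0 < c1 := lt_of_le_of_ne (hcn1) (fun h => hedgeB h.symm)
  have hpos2 : 0 < c2 := lt_of_le_of_ne (hcn2) (fun h => hedgeC h.symm)
  have hFint : F ∈ interior K := by
    rw [hK, ← hrangeb, b.interior_convexHull]
    intro i
    fin_cases i
    · rw [show ((⟨0, by norm_num⟩ : Fin 3)) = (0 : Fin 3) from rfl, hc0d]; exact hpos0
    · rw [show ((⟨1, by norm_num⟩ : Fin 3)) = (1 : Fin 3) from rfl, hc1d]; exact hpos1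
    · rw [show ((⟨2, by norm_num⟩ : Fin 3)) = (2 : Fin 3) from rfl, hc2d]; exact hpos2
  -- gradient condition
  have hgrad := min_interior_grad P₁ P₂ P₃ F hvert1 hvert2 hvert3
    (by rw [← hK]; exact hFint) (by rw [← hK]; exact hmin)
  set W1 := ‖F - P₁‖⁻¹ • (F - P₁) with hW1
  set W2 := ‖F - P₂‖⁻¹ • (F - P₂) with hW2
  set W3 := ‖F - P₃‖⁻¹ • (F - P₃) with hW3
  have hW1n : ‖W1‖ = 1 := norm_smul_inv_norm (sub_ne_zero.mpr hvert1)
  have hW2n : ‖W2‖ = 1 := norm_smul_inv_norm (sub_ne_zero.mpr hvert2)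
  have hW3n : ‖W3‖ = 1 := norm_smul_inv_norm (sub_ne_zero.mpr hvert3)
  have h12 : ⟪W1, W2⟫ = -(1/2) := by
    have hsw : W1 + W2 = -W3 := eq_neg_of_add_eq_zero_left hgrad
    have hn : ‖W1 + W2‖ ^ 2 = 1 := by rw [hsw, norm_neg, hW3n]; norm_num
    rw [norm_add_sq_real, hW1n, hW2n] at hn
    linarith
  have h23 : ⟪W2, W3⟫ = -(1/2) := by
    have hg2 : W1 + (W2 + W3) = 0 := by rw [← add_assoc]; exact hgrad
    have hsw : W2 + W3 = -W1 := eq_neg_of_add_eq_zero_right hg2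
    have hn : ‖W2 + W3‖ ^ 2 = 1 := by rw [hsw, norm_neg, hW1n]; norm_num
    rw [norm_add_sq_real, hW2n, hW3n] at hn
    linarith
  have h31 : ⟪W3, W1⟫ = -(1/2) := by
    have hg2 : W3 + W1 + W2 = 0 := by rw [show W3 + W1 + W2 = W1 + W2 + W3 by abel]; exact hgrad
    have hsw : W3 + W1 = -W2 := eq_neg_of_add_eq_zero_left hg2
    have hn : ‖W3 + W1‖ ^ 2 = 1 := by rw [hsw, norm_neg, hW2n]; norm_num
    rw [norm_add_sq_real, hW3n, hW1n] at hn
    linarith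
  have hang12 : EuclideanGeometry.angle P₁ F P₂ = 2 * π / 3 := by
    rw [eg_angle]
    apply inner_to_angle (sub_ne_zero.mpr (Ne.symm hvert1)) (sub_ne_zero.mpr (Ne.symm hvert2))
    rw [neg_unit P₁ F, neg_unit P₂ F, inner_neg_neg]
    exact h12
  have hang23 : EuclideanGeometry.angle P₂ F P₃ = 2 * π / 3 := by
    rw [eg_angle]
    apply inner_to_angle (sub_ne_zero.mpr (Ne.symm hvert2)) (sub_ne_zero.mpr (Ne.symm hvert3))
    rw [neg_unit P₂ F, neg_unit P₃ F, inner_neg_neg]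
    exact h23
  have hang31 : EuclideanGeometry.angle P₃ F P₁ = 2 * π / 3 := by
    rw [eg_angle]
    apply inner_to_angle (sub_ne_zero.mpr (Ne.symm hvert3)) (sub_ne_zero.mpr (Ne.symm hvert1))
    rw [neg_unit P₃ F, neg_unit P₁ F, inner_neg_neg]
    exact h31
  refine ⟨F, ⟨hFint, hang12, hang23, hang31⟩, ?_⟩
  rintro Y ⟨hYint, hY12, hY23, hY31⟩
  have hpine : π / 2 ≠ 2 * π / 3 := by
    intro h
    have := Real.pi_pos
    linarith
  have hY1 : Y ≠ P₁ := by
    intro h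
    rw [h, EuclideanGeometry.angle_self_left] at hY12
    exact hpine hY12
  have hY2 : Y ≠ P₂ := by
    intro h
    rw [h, EuclideanGeometry.angle_self_right] at hY12
    exact hpine hY12
  have hY3 : Y ≠ P₃ := by
    intro h
    rw [h, EuclideanGeometry.angle_self_right] at hY23
    exact hpine hY23
  exact fermat_unique P₁ P₂ P₃ Y F hY1 hY2 hY3 hvert1 hvert2 hvert3
    (by rw [← eg_angle]; exact hY12) (by rw [← eg_angle]; exact hY23)
    (by rw [← eg_angle]; exact hY31)
    (by rw [← eg_angle]; exact hang12) (by rw [← eg_angle]; exact hang23)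
    (by rw [← eg_angle]; exact hang31)
end

section
/- Let P₁, P₂, P₃ be three affinely independent points in the Euclidean plane ℝ² and let P₀ be a point distinct from P₁, P₂ and P₃. Then (P₀ − P₁)/‖P₀ − P₁‖ + (P₀ − P₂)/‖P₀ − P₂‖ + (P₀ − P₃)/‖P₀ − P₃‖ = 0 if and only if P₀ lies in the interior of the convex hull of {P₁, P₂, P₃} and ∠P₁P₀P₂ = ∠P₂P₀P₃ = ∠P₃P₀P₁ = 2π/3. -/
open Real EuclideanGeometry

lemma angle_eq_two_pi_div_three_iff {E : Type*} [NormedAddCommGroup E]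
    [InnerProductSpace ℝ E] {x y : E} (hx : ‖x‖ = 1) (hy : ‖y‖ = 1) :
    InnerProductGeometry.angle x y = 2 * π / 3 ↔ (inner ℝ x y : ℝ) = -(1/2) := by
  have hcos : Real.cos (2 * π / 3) = -(1/2) := by
    have : (2 : ℝ) * π / 3 = π - π / 3 := by ring
    rw [this, Real.cos_pi_sub, Real.cos_pi_div_three]
  have hdef : InnerProductGeometry.angle x y = Real.arccos (inner ℝ x y : ℝ) := by
    rw [InnerProductGeometry.angle, hx, hy]
    norm_num
  constructor
  · intro h
    have h1 : |(inner ℝ x y : ℝ)| ≤ 1 := by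
      have := abs_real_inner_le_norm x y
      rwa [hx, hy, mul_one] at this
    have := Real.cos_arccos (neg_le_of_abs_le h1) (le_of_abs_le h1)
    rw [← hdef, h, hcos] at this
    linarith
  · intro h
    rw [hdef, h]
    rw [← hcos, Real.arccos_cos (by positivity) (by nlinarith [Real.pi_pos])]

theorem unit_vectors_sum_zero_iff_interior_and_angles
    (P₁ P₂ P₃ : EuclideanSpace ℝ (Fin 2))
    (hind : AffineIndependent ℝ ![P₁, P₂, P₃])
    (P₀ : EuclideanSpace ℝ (Fin 2))
    (h₁ : P₀ ≠ P₁) (h₂ : P₀ ≠ P₂) (h₃ : P₀ ≠ P₃) :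
    ‖P₀ - P₁‖⁻¹ • (P₀ - P₁) + ‖P₀ - P₂‖⁻¹ • (P₀ - P₂) + ‖P₀ - P₃‖⁻¹ • (P₀ - P₃) = 0 ↔
      P₀ ∈ interior (convexHull ℝ {P₁, P₂, P₃}) ∧
      EuclideanGeometry.angle P₁ P₀ P₂ = 2 * π / 3 ∧
      EuclideanGeometry.angle P₂ P₀ P₃ = 2 * π / 3 ∧
      EuclideanGeometry.angle P₃ P₀ P₁ = 2 * π / 3 := by
  have hne1 : P₀ - P₁ ≠ 0 := sub_ne_zero.mpr h₁
  have hne2 : P₀ - P₂ ≠ 0 := sub_ne_zero.mpr h₂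
  have hne3 : P₀ - P₃ ≠ 0 := sub_ne_zero.mpr h₃
  have hr1 : (0:ℝ) < ‖P₀ - P₁‖⁻¹ := inv_pos.mpr (norm_pos_iff.mpr hne1)
  have hr2 : (0:ℝ) < ‖P₀ - P₂‖⁻¹ := inv_pos.mpr (norm_pos_iff.mpr hne2)
  have hr3 : (0:ℝ) < ‖P₀ - P₃‖⁻¹ := inv_pos.mpr (norm_pos_iff.mpr hne3)
  set u₁ : EuclideanSpace ℝ (Fin 2) := ‖P₀ - P₁‖⁻¹ • (P₀ - P₁) with hu₁
  set u₂ : EuclideanSpace ℝ (Fin 2) := ‖P₀ - P₂‖⁻¹ • (P₀ - P₂) with hu₂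
  set u₃ : EuclideanSpace ℝ (Fin 2) := ‖P₀ - P₃‖⁻¹ • (P₀ - P₃) with hu₃
  have hn1 : ‖u₁‖ = 1 := norm_smul_inv_norm hne1
  have hn2 : ‖u₂‖ = 1 := norm_smul_inv_norm hne2
  have hn3 : ‖u₃‖ = 1 := norm_smul_inv_norm hne3
  have hang12 : EuclideanGeometry.angle P₁ P₀ P₂ = InnerProductGeometry.angle u₁ u₂ := by
    rw [EuclideanGeometry.angle, hu₁, hu₂,
      show (P₁ -ᵥ P₀ : EuclideanSpace ℝ (Fin 2)) = -(P₀ - P₁) by rw [vsub_eq_sub, ← neg_sub],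
      show (P₂ -ᵥ P₀ : EuclideanSpace ℝ (Fin 2)) = -(P₀ - P₂) by rw [vsub_eq_sub, ← neg_sub],
      InnerProductGeometry.angle_neg_neg,
      InnerProductGeometry.angle_smul_left_of_pos _ _ hr1,
      InnerProductGeometry.angle_smul_right_of_pos _ _ hr2]
  have hang23 : EuclideanGeometry.angle P₂ P₀ P₃ = InnerProductGeometry.angle u₂ u₃ := by
    rw [EuclideanGeometry.angle, hu₂, hu₃,
      show (P₂ -ᵥ P₀ : EuclideanSpace ℝ (Fin 2)) = -(P₀ - P₂) by rw [vsub_eq_sub, ← neg_sub],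
      show (P₃ -ᵥ P₀ : EuclideanSpace ℝ (Fin 2)) = -(P₀ - P₃) by rw [vsub_eq_sub, ← neg_sub],
      InnerProductGeometry.angle_neg_neg,
      InnerProductGeometry.angle_smul_left_of_pos _ _ hr2,
      InnerProductGeometry.angle_smul_right_of_pos _ _ hr3]
  have hang31 : EuclideanGeometry.angle P₃ P₀ P₁ = InnerProductGeometry.angle u₃ u₁ := by
    rw [EuclideanGeometry.angle, hu₃, hu₁,
      show (P₃ -ᵥ P₀ : EuclideanSpace ℝ (Fin 2)) = -(P₀ - P₃) by rw [vsub_eq_sub, ← neg_sub],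
      show (P₁ -ᵥ P₀ : EuclideanSpace ℝ (Fin 2)) = -(P₀ - P₁) by rw [vsub_eq_sub, ← neg_sub],
      InnerProductGeometry.angle_neg_neg,
      InnerProductGeometry.angle_smul_left_of_pos _ _ hr3,
      InnerProductGeometry.angle_smul_right_of_pos _ _ hr1]
  have hself1 : (inner ℝ u₁ u₁ : ℝ) = 1 := by
    rw [real_inner_self_eq_norm_sq, hn1]; norm_num
  have hself2 : (inner ℝ u₂ u₂ : ℝ) = 1 := by
    rw [real_inner_self_eq_norm_sq, hn2]; norm_num
  have hself3 : (inner ℝ u₃ u₃ : ℝ) = 1 := by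
    rw [real_inner_self_eq_norm_sq, hn3]; norm_num
  have c12 := real_inner_comm u₁ u₂
  have c23 := real_inner_comm u₂ u₃
  have c31 := real_inner_comm u₃ u₁
  constructor
  · intro h
    have e1 : (inner ℝ (u₁ + u₂ + u₃) u₁ : ℝ) = 0 := by rw [h]; simp
    have e2 : (inner ℝ (u₁ + u₂ + u₃) u₂ : ℝ) = 0 := by rw [h]; simp
    have e3 : (inner ℝ (u₁ + u₂ + u₃) u₃ : ℝ) = 0 := by rw [h]; simp
    simp only [inner_add_left, hself1, hself2, hself3] at e1 e2 e3
    have a12 : (inner ℝ u₁ u₂ : ℝ) = -(1/2) := by linarith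
    have a23 : (inner ℝ u₂ u₃ : ℝ) = -(1/2) := by linarith
    have a31 : (inner ℝ u₃ u₁ : ℝ) = -(1/2) := by linarith
    refine ⟨?_, ?_, ?_, ?_⟩
    · -- interior
      have htop : affineSpan ℝ (Set.range ![P₁, P₂, P₃]) = ⊤ := by
        rw [hind.affineSpan_eq_top_iff_card_eq_finrank_add_one]
        simp [finrank_euclideanSpace_fin]
      let b : AffineBasis (Fin 3) ℝ (EuclideanSpace ℝ (Fin 2)) := ⟨![P₁, P₂, P₃], hind, htop⟩
      have hrange : Set.range ![P₁, P₂, P₃] = ({P₁, P₂, P₃} : Set (EuclideanSpace ℝ (Fin 2))) := by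
        ext x
        constructor
        · rintro ⟨i, rfl⟩; fin_cases i <;> simp
        · intro hx
          simp only [Set.mem_insert_iff, Set.mem_singleton_iff] at hx
          rcases hx with rfl | rfl | rfl
          exacts [⟨0, rfl⟩, ⟨1, rfl⟩, ⟨2, rfl⟩]
      set t₁ := ‖P₀ - P₁‖⁻¹
      set t₂ := ‖P₀ - P₂‖⁻¹
      set t₃ := ‖P₀ - P₃‖⁻¹
      have hW : (0:ℝ) < t₁ + t₂ + t₃ := by linarith
      set W := t₁ + t₂ + t₃ with hWdef
      set ω : Fin 3 → ℝ := ![t₁ / W, t₂ / W, t₃ / W] with hω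
      have hωsum : ∑ i, ω i = 1 := by
        rw [Fin.sum_univ_three]
        simp only [hω, Matrix.cons_val_zero, Matrix.cons_val_one, Matrix.head_cons,
          Matrix.cons_val_two, Matrix.tail_cons]
        field_simp
        exact hWdef.symm
      have hcomb : Finset.univ.affineCombination ℝ ![P₁, P₂, P₃] ω = P₀ := by
        rw [Finset.affineCombination_eq_linear_combination _ _ _ hωsum, Fin.sum_univ_three]
        simp only [hω, Matrix.cons_val_zero, Matrix.cons_val_one, Matrix.head_cons,
          Matrix.cons_val_two, Matrix.tail_cons]
        have key : W • P₀ = t₁ • P₁ + t₂ • P₂ + t₃ • P₃ := by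
          have h' : t₁ • (P₀ - P₁) + t₂ • (P₀ - P₂) + t₃ • (P₀ - P₃) = 0 := h
          rw [hWdef]
          linear_combination (norm := module) h'
        have : P₀ = W⁻¹ • (W • P₀) := by rw [smul_smul, inv_mul_cancel₀ hW.ne', one_smul]
        rw [this, key]
        rw [smul_add, smul_add, smul_smul, smul_smul, smul_smul]
        rw [div_eq_inv_mul, div_eq_inv_mul, div_eq_inv_mul]
      have hmem : ∀ i, 0 < b.coord i P₀ := by
        intro i
        have : b.coord i P₀ = ω i := by
          rw [← hcomb]
          exact b.coord_apply_combination_of_mem (Finset.mem_univ i) hωsum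
        rw [this]
        fin_cases i
        · exact div_pos hr1 hW
        · exact div_pos hr2 hW
        · exact div_pos hr3 hW
      have hbr : Set.range (b : Fin 3 → EuclideanSpace ℝ (Fin 2)) = {P₁, P₂, P₃} := by
        rw [show (b : Fin 3 → EuclideanSpace ℝ (Fin 2)) = ![P₁, P₂, P₃] from rfl, hrange]
      rw [← hbr]
      rw [b.interior_convexHull]
      exact hmem
    · rw [hang12, angle_eq_two_pi_div_three_iff hn1 hn2]; exact a12
    · rw [hang23, angle_eq_two_pi_div_three_iff hn2 hn3]; exact a23
    · rw [hang31, angle_eq_two_pi_div_three_iff hn3 hn1]; exact a31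
  · rintro ⟨-, a12, a23, a31⟩
    rw [hang12, angle_eq_two_pi_div_three_iff hn1 hn2] at a12
    rw [hang23, angle_eq_two_pi_div_three_iff hn2 hn3] at a23
    rw [hang31, angle_eq_two_pi_div_three_iff hn3 hn1] at a31
    have : (inner ℝ (u₁ + u₂ + u₃) (u₁ + u₂ + u₃) : ℝ) = 0 := by
      simp only [inner_add_left, inner_add_right, hself1, hself2, hself3]
      linarith
    exact inner_self_eq_zero.mp this
end

section
/- Let P₁, P₂, P₃ be three affinely independent points in the Euclidean plane ℝ² such that all three interior angles of the triangle (∠P₂P₁P₃, ∠P₁P₂P₃, ∠P₁P₃P₂) are strictly less than 2π/3, and define f : ℝ² → ℝ by f(P) = dist(P, P₁) + dist(P, P₂) + dist(P, P₃). Then f has a unique global minimizer P₀; moreover P₀ lies in the interior of the convex hull of {P₁, P₂, P₃} and satisfies ∠P₁P₀P₂ = ∠P₂P₀P₃ = ∠P₃P₀P₁ = 2π/3. -/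
open Real EuclideanGeometry

open RealInnerProductSpace

variable {F : Type*} [NormedAddCommGroup F] [InnerProductSpace ℝ F]

private lemma norm_sub_le_quad {a : F} (b : F) (ha : a ≠ 0) :
    ‖a - b‖ ≤ ‖a‖ - ⟪a, b⟫ / ‖a‖ + ‖b‖ ^ 2 / (2 * ‖a‖) := by
  have hs : (0:ℝ) < ‖a‖ := norm_pos_iff.mpr ha
  have key : ‖a - b‖ ^ 2 = ‖a‖ ^ 2 - 2 * ⟪a, b⟫ + ‖b‖ ^ 2 := by
    rw [@norm_sub_sq_real]
  have h2 : ‖a‖ - ⟪a, b⟫ / ‖a‖ + ‖b‖ ^ 2 / (2 * ‖a‖)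
      = (2 * ‖a‖ ^ 2 - 2 * ⟪a, b⟫ + ‖b‖ ^ 2) / (2 * ‖a‖) := by
    field_simp
  rw [h2, le_div_iff₀ (by positivity)]
  nlinarith [sq_nonneg (‖a‖ - ‖a - b‖), norm_nonneg (a - b)]

private lemma exists_small_t {s C : ℝ} (hs : s < 0) (hC : 0 ≤ C) :
    ∃ t : ℝ, 0 < t ∧ t * s + t ^ 2 * C < 0 := by
  refine ⟨min 1 (-s / (2 * C + 1)), lt_min one_pos (div_pos (by linarith) (by linarith)), ?_⟩
  set t := min 1 (-s / (2 * C + 1)) with ht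
  have h0 : 0 < t := lt_min one_pos (div_pos (by linarith) (by linarith))
  have h1 : t ≤ 1 := min_le_left _ _
  have h3 : t * (2 * C + 1) ≤ -s := (le_div_iff₀ (by linarith)).mp (min_le_right _ _)
  nlinarith [mul_le_mul_of_nonneg_left h3 h0.le, mul_pos h0 h0]

private lemma inner_eq_neg_half {u v w : F} (hu : ‖u‖ = 1) (hv : ‖v‖ = 1) (hw : ‖w‖ = 1)
    (h : u + v + w = 0) : ⟪u, v⟫ = -(1/2) := by
  have hw' : ‖u + v‖ ^ 2 = 1 := by
    have : u + v = -w := by linear_combination (norm := abel) h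
    rw [this, norm_neg, hw]; norm_num
  rw [@norm_add_sq_real, hu, hv] at hw'
  linarith

private lemma eq_of_inner_eq_norm {u x : F} (hu : ‖u‖ = 1) (h : ⟪u, x⟫ = ‖x‖) :
    x = ‖x‖ • u := by
  have hz : ‖x - ‖x‖ • u‖ ^ 2 = 0 := by
    rw [@norm_sub_sq_real, real_inner_smul_right, norm_smul, real_inner_comm, h, hu]
    simp [abs_of_nonneg (norm_nonneg x)]; ring
  have hz' : x - ‖x‖ • u = 0 := by
    have := norm_nonneg (x - ‖x‖ • u)
    have : ‖x - ‖x‖ • u‖ = 0 := by nlinarith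
    exact norm_eq_zero.mp this
  exact sub_eq_zero.mp hz'


private lemma unit_norm {A B : F} (hB : B ≠ A) : ‖(‖B - A‖⁻¹ • (B - A))‖ = 1 := by
  have hBA : (0:ℝ) < ‖B - A‖ := by rw [norm_pos_iff, sub_ne_zero]; exact hB
  rw [norm_smul, norm_inv, norm_norm, inv_mul_cancel₀ hBA.ne']

private lemma dist_add_smul_le {A B : F} (hB : B ≠ A) (t : ℝ) (v : F) :
    dist (A + t • v) B ≤
      dist A B - t * ⟪‖B - A‖⁻¹ • (B - A), v⟫ + t ^ 2 * (‖v‖ ^ 2 / (2 * ‖B - A‖)) := by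
  have hBA : (0:ℝ) < ‖B - A‖ := by rw [norm_pos_iff, sub_ne_zero]; exact hB
  have h1 : dist (A + t • v) B = ‖(B - A) - t • v‖ := by
    rw [dist_eq_norm, ← norm_neg]; congr 1; abel
  have h2 : dist A B = ‖B - A‖ := by rw [dist_eq_norm, norm_sub_rev]
  rw [h1, h2]
  refine (norm_sub_le_quad _ (sub_ne_zero.mpr hB)).trans_eq ?_
  rw [real_inner_smul_right, real_inner_smul_left, norm_smul, Real.norm_eq_abs,
    mul_pow, sq_abs]
  field_simp

private lemma not_min_at_vertex {A B C : F} (hB : B ≠ A) (hC : C ≠ A)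
    (hip : -(1/2) < ⟪‖B - A‖⁻¹ • (B - A), ‖C - A‖⁻¹ • (C - A)⟫) :
    ∃ P : F, dist P A + dist P B + dist P C < dist A A + dist A B + dist A C := by
  set u := ‖B - A‖⁻¹ • (B - A) with hu
  set w := ‖C - A‖⁻¹ • (C - A) with hwdef
  have hBA : (0:ℝ) < ‖B - A‖ := by rw [norm_pos_iff, sub_ne_zero]; exact hB
  have hCA : (0:ℝ) < ‖C - A‖ := by rw [norm_pos_iff, sub_ne_zero]; exact hC
  have hun : ‖u‖ = 1 := unit_norm hB
  have hwn : ‖w‖ = 1 := unit_norm hC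
  set v := u + w with hv
  have hv2 : ‖v‖ ^ 2 = 2 + 2 * ⟪u, w⟫ := by
    rw [hv, @norm_add_sq_real, hun, hwn]; ring
  have hv1 : 1 < ‖v‖ := by nlinarith [norm_nonneg v]
  obtain ⟨t, ht, hts⟩ := exists_small_t (s := ‖v‖ - ‖v‖ ^ 2)
      (C := ‖v‖ ^ 2 / (2 * ‖B - A‖) + ‖v‖ ^ 2 / (2 * ‖C - A‖)) (by nlinarith) (by positivity)
  refine ⟨A + t • v, ?_⟩
  have hdA : dist (A + t • v) A = t * ‖v‖ := by
    rw [dist_eq_norm]; simp [norm_smul, abs_of_pos ht]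
  have hdB := dist_add_smul_le hB t v
  have hdC := dist_add_smul_le hC t v
  have hsum : ⟪u, v⟫ + ⟪w, v⟫ = ‖v‖ ^ 2 := by
    rw [← inner_add_left, ← hv, real_inner_self_eq_norm_sq]
  rw [dist_self]
  rw [← hu] at hdB
  rw [← hwdef] at hdC
  have hts' : t * ⟪u, v⟫ + t * ⟪w, v⟫ = t * ‖v‖ ^ 2 := by
    rw [← mul_add, hsum]
  linarith

private lemma unit_sum_zero_of_min {P₀ Q₁ Q₂ Q₃ : F} (h1 : Q₁ ≠ P₀) (h2 : Q₂ ≠ P₀) (h3 : Q₃ ≠ P₀)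
    (hmin : ∀ P : F, dist P₀ Q₁ + dist P₀ Q₂ + dist P₀ Q₃ ≤ dist P Q₁ + dist P Q₂ + dist P Q₃) :
    ‖Q₁ - P₀‖⁻¹ • (Q₁ - P₀) + ‖Q₂ - P₀‖⁻¹ • (Q₂ - P₀) + ‖Q₃ - P₀‖⁻¹ • (Q₃ - P₀) = 0 := by
  by_contra hw
  set v := ‖Q₁ - P₀‖⁻¹ • (Q₁ - P₀) + ‖Q₂ - P₀‖⁻¹ • (Q₂ - P₀) + ‖Q₃ - P₀‖⁻¹ • (Q₃ - P₀) with hv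
  have hvpos : 0 < ‖v‖ := norm_pos_iff.mpr hw
  have hd1 : (0:ℝ) < ‖Q₁ - P₀‖ := by rw [norm_pos_iff, sub_ne_zero]; exact h1
  have hd2 : (0:ℝ) < ‖Q₂ - P₀‖ := by rw [norm_pos_iff, sub_ne_zero]; exact h2
  have hd3 : (0:ℝ) < ‖Q₃ - P₀‖ := by rw [norm_pos_iff, sub_ne_zero]; exact h3
  obtain ⟨t, ht, hts⟩ := exists_small_t (s := -‖v‖ ^ 2)
      (C := ‖v‖ ^ 2 / (2 * ‖Q₁ - P₀‖) + ‖v‖ ^ 2 / (2 * ‖Q₂ - P₀‖) + ‖v‖ ^ 2 / (2 * ‖Q₃ - P₀‖))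
      (by nlinarith) (by positivity)
  have hb1 := dist_add_smul_le h1 t v
  have hb2 := dist_add_smul_le h2 t v
  have hb3 := dist_add_smul_le h3 t v
  have hsum : ⟪‖Q₁ - P₀‖⁻¹ • (Q₁ - P₀), v⟫ + ⟪‖Q₂ - P₀‖⁻¹ • (Q₂ - P₀), v⟫
      + ⟪‖Q₃ - P₀‖⁻¹ • (Q₃ - P₀), v⟫ = ‖v‖ ^ 2 := by
    rw [← inner_add_left, ← inner_add_left, ← hv, real_inner_self_eq_norm_sq]
  have := hmin (P₀ + t • v)
  have hts' : t * ⟪‖Q₁ - P₀‖⁻¹ • (Q₁ - P₀), v⟫ + t * ⟪‖Q₂ - P₀‖⁻¹ • (Q₂ - P₀), v⟫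
      + t * ⟪‖Q₃ - P₀‖⁻¹ • (Q₃ - P₀), v⟫ = t * ‖v‖ ^ 2 := by
    rw [← mul_add, ← mul_add, hsum]
  linarith

private lemma cos_two_pi_div_three' : Real.cos (2 * π / 3) = -(1/2) := by
  rw [show (2 * π / 3 : ℝ) = π - π / 3 by ring, Real.cos_pi_sub, Real.cos_pi_div_three]

private lemma neg_half_lt_of_angle_lt {X Y Z : F} (hY : Y ≠ X) (hZ : Z ≠ X)
    (h : EuclideanGeometry.angle Y X Z < 2 * π / 3) :
    -(1/2) < ⟪‖Y - X‖⁻¹ • (Y - X), ‖Z - X‖⁻¹ • (Z - X)⟫ := by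
  have hy : (0:ℝ) < ‖Y - X‖ := by rw [norm_pos_iff, sub_ne_zero]; exact hY
  have hz : (0:ℝ) < ‖Z - X‖ := by rw [norm_pos_iff, sub_ne_zero]; exact hZ
  have hpi := Real.pi_pos
  have hcos : Real.cos (2 * π / 3) < Real.cos (EuclideanGeometry.angle Y X Z) :=
    Real.strictAntiOn_cos
      ⟨EuclideanGeometry.angle_nonneg _ _ _, EuclideanGeometry.angle_le_pi _ _ _⟩
      ⟨by positivity, by linarith⟩ h
  have hcosval : Real.cos (EuclideanGeometry.angle Y X Z)
      = ⟪Y - X, Z - X⟫ / (‖Y - X‖ * ‖Z - X‖) := by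
    rw [EuclideanGeometry.angle, vsub_eq_sub, vsub_eq_sub]
    exact InnerProductGeometry.cos_angle _ _
  rw [hcosval, cos_two_pi_div_three'] at hcos
  rw [real_inner_smul_left, real_inner_smul_right]
  have heq : ⟪Y - X, Z - X⟫ / (‖Y - X‖ * ‖Z - X‖)
      = ‖Y - X‖⁻¹ * (‖Z - X‖⁻¹ * ⟪Y - X, Z - X⟫) := by
    rw [div_eq_mul_inv, mul_inv]; ring
  linarith [heq ▸ hcos]

private lemma angle_eq_two_pi_div_three {X Y Z : F} (hY : Y ≠ X) (hZ : Z ≠ X)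
    (h : ⟪‖Y - X‖⁻¹ • (Y - X), ‖Z - X‖⁻¹ • (Z - X)⟫ = -(1/2)) :
    EuclideanGeometry.angle Y X Z = 2 * π / 3 := by
  have hy : (0:ℝ) < ‖Y - X‖ := by rw [norm_pos_iff, sub_ne_zero]; exact hY
  have hz : (0:ℝ) < ‖Z - X‖ := by rw [norm_pos_iff, sub_ne_zero]; exact hZ
  have hpi := Real.pi_pos
  rw [real_inner_smul_left, real_inner_smul_right] at h
  rw [EuclideanGeometry.angle, vsub_eq_sub, vsub_eq_sub, InnerProductGeometry.angle]
  have heq : ⟪Y - X, Z - X⟫ / (‖Y - X‖ * ‖Z - X‖)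
      = ‖Y - X‖⁻¹ * (‖Z - X‖⁻¹ * ⟪Y - X, Z - X⟫) := by
    rw [div_eq_mul_inv, mul_inv]; ring
  rw [heq, h, ← cos_two_pi_div_three']
  exact Real.arccos_cos (by positivity) (by linarith)

private lemma inner_le_dist' {A Q : F} {u : F} (hu : ‖u‖ = 1) : ⟪u, A - Q⟫ ≤ dist Q A := by
  calc ⟪u, A - Q⟫ ≤ ‖u‖ * ‖A - Q‖ := real_inner_le_norm _ _
  _ = dist Q A := by rw [hu, one_mul, dist_eq_norm, norm_sub_rev]

set_option maxHeartbeats 1000000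

theorem fermat_point_interior_of_small_angles
    (P₁ P₂ P₃ : EuclideanSpace ℝ (Fin 2))
    (hind : AffineIndependent ℝ ![P₁, P₂, P₃])
    (h₁ : EuclideanGeometry.angle P₂ P₁ P₃ < 2 * π / 3)
    (h₂ : EuclideanGeometry.angle P₁ P₂ P₃ < 2 * π / 3)
    (h₃ : EuclideanGeometry.angle P₁ P₃ P₂ < 2 * π / 3)
    (f : EuclideanSpace ℝ (Fin 2) → ℝ)
    (hf : ∀ P, f P = dist P P₁ + dist P P₂ + dist P P₃) :
    ∃ P₀ : EuclideanSpace ℝ (Fin 2),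
      (∀ P, f P₀ ≤ f P) ∧
      (∀ Q, (∀ P, f Q ≤ f P) → Q = P₀) ∧
      P₀ ∈ interior (convexHull ℝ {P₁, P₂, P₃}) ∧
      EuclideanGeometry.angle P₁ P₀ P₂ = 2 * π / 3 ∧
      EuclideanGeometry.angle P₂ P₀ P₃ = 2 * π / 3 ∧
      EuclideanGeometry.angle P₃ P₀ P₁ = 2 * π / 3 := by
  have hinj := hind.injective
  have h12 : P₁ ≠ P₂ := fun h => by
    have : (0 : Fin 3) = 1 := hinj (show ![P₁,P₂,P₃] 0 = ![P₁,P₂,P₃] 1 by simp [h])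
    simp at this
  have h13 : P₁ ≠ P₃ := fun h => by
    have : (0 : Fin 3) = 2 := hinj (show ![P₁,P₂,P₃] 0 = ![P₁,P₂,P₃] 2 by simp [h])
    simp at this
  have h23 : P₂ ≠ P₃ := fun h => by
    have : (1 : Fin 3) = 2 := hinj (show ![P₁,P₂,P₃] 1 = ![P₁,P₂,P₃] 2 by simp [h])
    simp at this
  have hcont : Continuous f := by
    have : f = fun P => dist P P₁ + dist P P₂ + dist P P₃ := funext hf
    rw [this]; fun_prop
  have hfP₁ : (0:ℝ) ≤ f P₁ := by rw [hf]; positivity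
  have hP₁mem : P₁ ∈ Metric.closedBall P₁ (f P₁) := by
    simp [Metric.mem_closedBall, hfP₁]
  obtain ⟨P₀, hP₀mem, hminK⟩ :=
    (isCompact_closedBall P₁ (f P₁)).exists_isMinOn ⟨P₁, hP₁mem⟩ hcont.continuousOn
  have hglobal : ∀ P, f P₀ ≤ f P := by
    intro P
    by_cases hP : P ∈ Metric.closedBall P₁ (f P₁)
    · exact isMinOn_iff.mp hminK P hP
    · have hPd : f P₁ < dist P P₁ := by
        simpa [Metric.mem_closedBall] using hP
      have h0 : f P₀ ≤ f P₁ := isMinOn_iff.mp hminK P₁ hP₁mem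
      have : f P₁ < f P := by
        rw [hf P]
        have := dist_nonneg (x := P) (y := P₂)
        have := dist_nonneg (x := P) (y := P₃)
        linarith
      linarith
  -- P₀ is not a vertex
  have hne1 : P₀ ≠ P₁ := by
    rintro rfl
    obtain ⟨P, hP⟩ := not_min_at_vertex h12.symm h13.symm
      (neg_half_lt_of_angle_lt h12.symm h13.symm h₁)
    have hg := hglobal P
    rw [hf P, hf P₀] at hg
    rw [dist_self] at hP
    rw [dist_self] at hg
    linarith
  have hne2 : P₀ ≠ P₂ := by
    rintro rfl
    obtain ⟨P, hP⟩ := not_min_at_vertex h12 h23.symm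
      (neg_half_lt_of_angle_lt h12 h23.symm h₂)
    have hg := hglobal P
    rw [hf P, hf P₀] at hg
    rw [dist_self] at hP
    rw [dist_self] at hg
    linarith
  have hne3 : P₀ ≠ P₃ := by
    rintro rfl
    obtain ⟨P, hP⟩ := not_min_at_vertex h13 h23
      (neg_half_lt_of_angle_lt h13 h23 h₃)
    have hg := hglobal P
    rw [hf P, hf P₀] at hg
    rw [dist_self] at hP
    rw [dist_self] at hg
    linarith
  have hmin' : ∀ P, dist P₀ P₁ + dist P₀ P₂ + dist P₀ P₃
      ≤ dist P P₁ + dist P P₂ + dist P P₃ := by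
    intro P
    have := hglobal P
    rwa [hf P, hf P₀] at this
  have hstat := unit_sum_zero_of_min hne1.symm hne2.symm hne3.symm hmin'
  obtain ⟨u₁, hu₁def⟩ : ∃ u, u = ‖P₁ - P₀‖⁻¹ • (P₁ - P₀) := ⟨_, rfl⟩
  obtain ⟨u₂, hu₂def⟩ : ∃ u, u = ‖P₂ - P₀‖⁻¹ • (P₂ - P₀) := ⟨_, rfl⟩
  obtain ⟨u₃, hu₃def⟩ : ∃ u, u = ‖P₃ - P₀‖⁻¹ • (P₃ - P₀) := ⟨_, rfl⟩
  rw [← hu₁def, ← hu₂def, ← hu₃def] at hstat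
  have hu1 : ‖u₁‖ = 1 := by rw [hu₁def]; exact unit_norm hne1.symm
  have hu2 : ‖u₂‖ = 1 := by rw [hu₂def]; exact unit_norm hne2.symm
  have hu3 : ‖u₃‖ = 1 := by rw [hu₃def]; exact unit_norm hne3.symm
  have hc12 : ⟪u₁, u₂⟫ = -(1/2) := inner_eq_neg_half hu1 hu2 hu3 hstat
  have hc23 : ⟪u₂, u₃⟫ = -(1/2) := inner_eq_neg_half hu2 hu3 hu1
    (by rw [show u₂ + u₃ + u₁ = u₁ + u₂ + u₃ from by abel, hstat])
  have hc31 : ⟪u₃, u₁⟫ = -(1/2) := inner_eq_neg_half hu3 hu1 hu2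
    (by rw [show u₃ + u₁ + u₂ = u₁ + u₂ + u₃ from by abel, hstat])
  have hd1 : (0:ℝ) < ‖P₁ - P₀‖ := by rw [norm_pos_iff, sub_ne_zero]; exact hne1.symm
  have hd2 : (0:ℝ) < ‖P₂ - P₀‖ := by rw [norm_pos_iff, sub_ne_zero]; exact hne2.symm
  have hd3 : (0:ℝ) < ‖P₃ - P₀‖ := by rw [norm_pos_iff, sub_ne_zero]; exact hne3.symm
  -- uniqueness
  have huniq : ∀ Q, (∀ P, f Q ≤ f P) → Q = P₀ := by
    intro Q hQ
    have hfeq : f Q = f P₀ := le_antisymm (hQ P₀) (hglobal Q)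
    rw [hf Q, hf P₀] at hfeq
    have hl1 : ⟪u₁, P₁ - Q⟫ ≤ dist Q P₁ := inner_le_dist' hu1
    have hl2 : ⟪u₂, P₂ - Q⟫ ≤ dist Q P₂ := inner_le_dist' hu2
    have hl3 : ⟪u₃, P₃ - Q⟫ ≤ dist Q P₃ := inner_le_dist' hu3
    have hself1 : ⟪u₁, u₁⟫ = (1:ℝ) := by
      rw [real_inner_self_eq_norm_sq, hu1]; norm_num
    have hself2 : ⟪u₂, u₂⟫ = (1:ℝ) := by
      rw [real_inner_self_eq_norm_sq, hu2]; norm_num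
    have he1' : ⟪u₁, P₁ - Q⟫ = dist P₀ P₁ + ⟪u₁, P₀ - Q⟫ := by
      rw [show P₁ - Q = (P₁ - P₀) + (P₀ - Q) from by abel, inner_add_right, hu₁def,
        real_inner_smul_left, real_inner_self_eq_norm_sq, dist_eq_norm']
      field_simp
    have he2' : ⟪u₂, P₂ - Q⟫ = dist P₀ P₂ + ⟪u₂, P₀ - Q⟫ := by
      rw [show P₂ - Q = (P₂ - P₀) + (P₀ - Q) from by abel, inner_add_right, hu₂def,
        real_inner_smul_left, real_inner_self_eq_norm_sq, dist_eq_norm']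
      field_simp
    have he3' : ⟪u₃, P₃ - Q⟫ = dist P₀ P₃ + ⟪u₃, P₀ - Q⟫ := by
      rw [show P₃ - Q = (P₃ - P₀) + (P₀ - Q) from by abel, inner_add_right, hu₃def,
        real_inner_smul_left, real_inner_self_eq_norm_sq, dist_eq_norm']
      field_simp
    have hzero : ⟪u₁, P₀ - Q⟫ + ⟪u₂, P₀ - Q⟫ + ⟪u₃, P₀ - Q⟫ = 0 := by
      rw [← inner_add_left, ← inner_add_left, hstat, inner_zero_left]
    have heq1 : ⟪u₁, P₁ - Q⟫ = dist Q P₁ := by linarith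
    have heq2 : ⟪u₂, P₂ - Q⟫ = dist Q P₂ := by linarith
    have hx1 : P₁ - Q = ‖P₁ - Q‖ • u₁ :=
      eq_of_inner_eq_norm hu1 (by rw [heq1, dist_eq_norm'])
    have hx2 : P₂ - Q = ‖P₂ - Q‖ • u₂ :=
      eq_of_inner_eq_norm hu2 (by rw [heq2, dist_eq_norm'])
    have hP₁P₀ : P₁ - P₀ = ‖P₁ - P₀‖ • u₁ := by
      rw [hu₁def, smul_smul, mul_inv_cancel₀ hd1.ne', one_smul]
    have hP₂P₀ : P₂ - P₀ = ‖P₂ - P₀‖ • u₂ := by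
      rw [hu₂def, smul_smul, mul_inv_cancel₀ hd2.ne', one_smul]
    set α := ‖P₁ - P₀‖ - ‖P₁ - Q‖ with hα
    set β := ‖P₂ - P₀‖ - ‖P₂ - Q‖ with hβ
    have hq1 : Q - P₀ = α • u₁ := by
      rw [hα, sub_smul, ← hx1, ← hP₁P₀]; abel
    have hq2 : Q - P₀ = β • u₂ := by
      rw [hβ, sub_smul, ← hx2, ← hP₂P₀]; abel
    have heq12 : α • u₁ = β • u₂ := hq1 ▸ hq2
    have hi1 : ⟪u₁, α • u₁⟫ = ⟪u₁, β • u₂⟫ := by rw [heq12]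
    have hi2 : ⟪u₂, α • u₁⟫ = ⟪u₂, β • u₂⟫ := by rw [heq12]
    simp only [real_inner_smul_right] at hi1 hi2
    rw [hself1, hc12] at hi1
    rw [hself2, real_inner_comm u₁ u₂, hc12] at hi2
    have hα0 : α = 0 := by linarith
    have : Q - P₀ = 0 := by rw [hq1, hα0, zero_smul]
    exact sub_eq_zero.mp this
  -- interior membership
  have htop : affineSpan ℝ (Set.range ![P₁, P₂, P₃]) = ⊤ := by
    rw [hind.affineSpan_eq_top_iff_card_eq_finrank_add_one]
    simp [finrank_euclideanSpace]
  let b : AffineBasis (Fin 3) ℝ (EuclideanSpace ℝ (Fin 2)) := ⟨![P₁, P₂, P₃], hind, htop⟩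
  have hrange : Set.range ![P₁, P₂, P₃] = ({P₁, P₂, P₃} : Set (EuclideanSpace ℝ (Fin 2))) := by
    ext x
    simp only [Set.mem_insert_iff, Set.mem_singleton_iff]
    constructor
    · rintro ⟨i, rfl⟩; fin_cases i <;> simp
    · rintro (rfl | rfl | rfl)
      exacts [⟨0, rfl⟩, ⟨1, rfl⟩, ⟨2, rfl⟩]
  set S : ℝ := ‖P₁ - P₀‖⁻¹ + ‖P₂ - P₀‖⁻¹ + ‖P₃ - P₀‖⁻¹ with hS
  have hSpos : 0 < S := by positivity
  set w : Fin 3 → ℝ := ![S⁻¹ * ‖P₁ - P₀‖⁻¹, S⁻¹ * ‖P₂ - P₀‖⁻¹, S⁻¹ * ‖P₃ - P₀‖⁻¹] with hwdef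
  have hw1 : ∑ i, w i = 1 := by
    rw [Fin.sum_univ_three]
    simp only [hwdef, Matrix.cons_val_zero, Matrix.cons_val_one, Matrix.head_cons,
      Matrix.cons_val_two, Matrix.tail_cons]
    have hr : S⁻¹ * ‖P₁ - P₀‖⁻¹ + S⁻¹ * ‖P₂ - P₀‖⁻¹ + S⁻¹ * ‖P₃ - P₀‖⁻¹
        = S⁻¹ * (‖P₁ - P₀‖⁻¹ + ‖P₂ - P₀‖⁻¹ + ‖P₃ - P₀‖⁻¹) := by ring
    rw [hr, ← hS, inv_mul_cancel₀ hSpos.ne']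
  have hsum0 : ‖P₁ - P₀‖⁻¹ • P₁ + ‖P₂ - P₀‖⁻¹ • P₂ + ‖P₃ - P₀‖⁻¹ • P₃ = S • P₀ := by
    have h := hstat
    rw [hu₁def, hu₂def, hu₃def] at h
    rw [hS]
    linear_combination (norm := module) h
  have hP₀eq : P₀ = ∑ i, w i • ![P₁, P₂, P₃] i := by
    rw [Fin.sum_univ_three]
    simp only [hwdef, Matrix.cons_val_zero, Matrix.cons_val_one, Matrix.head_cons,
      Matrix.cons_val_two, Matrix.tail_cons]
    calc P₀ = S⁻¹ • (S • P₀) := by rw [smul_smul, inv_mul_cancel₀ hSpos.ne', one_smul]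
    _ = S⁻¹ • (‖P₁ - P₀‖⁻¹ • P₁ + ‖P₂ - P₀‖⁻¹ • P₂ + ‖P₃ - P₀‖⁻¹ • P₃) := by rw [hsum0]
    _ = _ := by rw [smul_add, smul_add, smul_smul, smul_smul, smul_smul]
  have hcoord : ∀ i, b.coord i P₀ = w i := by
    intro i
    have hcomb : P₀ = Finset.univ.affineCombination ℝ ![P₁, P₂, P₃] w := by
      rw [Finset.affineCombination_eq_linear_combination _ _ _ hw1]
      exact hP₀eq
    rw [hcomb]
    exact b.coord_apply_combination_of_mem (Finset.mem_univ i) hw1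
  have hmem : P₀ ∈ interior (convexHull ℝ ({P₁, P₂, P₃} : Set (EuclideanSpace ℝ (Fin 2)))) := by
    rw [← hrange]
    have hbr : Set.range (b : Fin 3 → EuclideanSpace ℝ (Fin 2)) = Set.range ![P₁, P₂, P₃] := by
      congr 1
    rw [← hbr, b.interior_convexHull]
    intro i
    rw [hcoord i]
    have h0 : (0:ℝ) < S⁻¹ := inv_pos.mpr hSpos
    fin_cases i
    · simpa [hwdef] using mul_pos h0 (inv_pos.mpr hd1)
    · simpa [hwdef] using mul_pos h0 (inv_pos.mpr hd2)
    · simpa [hwdef] using mul_pos h0 (inv_pos.mpr hd3)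
  exact ⟨P₀, hglobal, huniq, hmem,
    angle_eq_two_pi_div_three hne1.symm hne2.symm
      (by rw [← hu₁def, ← hu₂def]; exact hc12),
    angle_eq_two_pi_div_three hne2.symm hne3.symm
      (by rw [← hu₂def, ← hu₃def]; exact hc23),
    angle_eq_two_pi_div_three hne3.symm hne1.symm
      (by rw [← hu₃def, ← hu₁def]; exact hc31)⟩
end

section
/- Let P₁, P₂, P₃ be three affinely independent points in the Euclidean plane ℝ² and define f : ℝ² → ℝ by f(P) = dist(P, P₁) + dist(P, P₂) + dist(P, P₃). If the interior angle at the vertex P₁ satisfies ∠P₂P₁P₃ < 2π/3, then P₁ is not a global minimizer of f; that is, there exists a point P ∈ ℝ² with f(P) < f(P₁). -/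
set_option maxHeartbeats 1000000


open Real EuclideanGeometry

private lemma norm_sub_le_aux (a w : EuclideanSpace ℝ (Fin 2)) (ha : a ≠ 0) :
    ‖a - w‖ ≤ ‖a‖ - (inner ℝ a w : ℝ) / ‖a‖ + ‖w‖ ^ 2 / (2 * ‖a‖) := by
  have hna : (0 : ℝ) < ‖a‖ := norm_pos_iff.2 ha
  have h1 : (inner ℝ a w : ℝ) ≤ ‖a‖ * ‖w‖ := real_inner_le_norm a w
  have hsq : ‖a - w‖ ^ 2 = ‖a‖ ^ 2 - 2 * (inner ℝ a w : ℝ) + ‖w‖ ^ 2 := by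
    rw [@norm_sub_sq_real]
  have hwn : (0 : ℝ) ≤ ‖w‖ := norm_nonneg w
  have hr : (0 : ℝ) ≤ ‖a‖ - (inner ℝ a w : ℝ) / ‖a‖ + ‖w‖ ^ 2 / (2 * ‖a‖) := by
    have e1 : (inner ℝ a w : ℝ) / ‖a‖ * ‖a‖ = (inner ℝ a w : ℝ) := div_mul_cancel₀ _ (ne_of_gt hna)
    have e2 : ‖w‖ ^ 2 / (2 * ‖a‖) * (2 * ‖a‖) = ‖w‖ ^ 2 := div_mul_cancel₀ _ (by positivity)
    nlinarith [sq_nonneg (‖w‖ - ‖a‖), mul_pos hna hna]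
  have hsq2 : ‖a - w‖ ^ 2 ≤ (‖a‖ - (inner ℝ a w : ℝ) / ‖a‖ + ‖w‖ ^ 2 / (2 * ‖a‖)) ^ 2 := by
    have : (‖a‖ - (inner ℝ a w : ℝ) / ‖a‖ + ‖w‖ ^ 2 / (2 * ‖a‖)) ^ 2 - ‖a - w‖ ^ 2
        = ((inner ℝ a w : ℝ) / ‖a‖ - ‖w‖ ^ 2 / (2 * ‖a‖)) ^ 2 := by
      rw [hsq]; field_simp
      ring
    nlinarith [sq_nonneg ((inner ℝ a w : ℝ) / ‖a‖ - ‖w‖ ^ 2 / (2 * ‖a‖))]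
  nlinarith [norm_nonneg (a - w)]

theorem vertex_not_min_of_small_angle
    (P₁ P₂ P₃ : EuclideanSpace ℝ (Fin 2))
    (hind : AffineIndependent ℝ ![P₁, P₂, P₃])
    (f : EuclideanSpace ℝ (Fin 2) → ℝ)
    (hf : ∀ P, f P = dist P P₁ + dist P P₂ + dist P P₃)
    (hangle : EuclideanGeometry.angle P₂ P₁ P₃ < 2 * π / 3) :
    ∃ P : EuclideanSpace ℝ (Fin 2), f P < f P₁ := by
  have hinj := hind.injective
  have h12 : P₁ ≠ P₂ := fun h => by
    have : (0 : Fin 3) = 1 := hinj (by simpa [Matrix.cons_val_zero, Matrix.cons_val_one] using h)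
    simp at this
  have h13 : P₁ ≠ P₃ := fun h => by
    have : (0 : Fin 3) = 2 := hinj (by simpa using h)
    simp at this
  set a : EuclideanSpace ℝ (Fin 2) := P₂ - P₁ with ha_def
  set b : EuclideanSpace ℝ (Fin 2) := P₃ - P₁ with hb_def
  have ha : a ≠ 0 := sub_ne_zero.2 (Ne.symm h12)
  have hb : b ≠ 0 := sub_ne_zero.2 (Ne.symm h13)
  have hda : (0 : ℝ) < ‖a‖ := norm_pos_iff.2 ha
  have hdb : (0 : ℝ) < ‖b‖ := norm_pos_iff.2 hb
  set u : EuclideanSpace ℝ (Fin 2) := ‖a‖⁻¹ • a with hu_def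
  set v : EuclideanSpace ℝ (Fin 2) := ‖b‖⁻¹ • b with hv_def
  have hnu : ‖u‖ = 1 := by rw [hu_def, norm_smul, norm_inv, norm_norm, inv_mul_cancel₀ (ne_of_gt hda)]
  have hnv : ‖v‖ = 1 := by rw [hv_def, norm_smul, norm_inv, norm_norm, inv_mul_cancel₀ (ne_of_gt hdb)]
  set c : ℝ := inner ℝ u v with hc_def
  -- c > -1/2 from the angle hypothesis
  have hangle_eq : EuclideanGeometry.angle P₂ P₁ P₃ = InnerProductGeometry.angle a b := by
    rw [EuclideanGeometry.angle, ha_def, hb_def]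
    norm_num [vsub_eq_sub]
  have hcosformula : Real.cos (InnerProductGeometry.angle a b) = (inner ℝ a b : ℝ) / (‖a‖ * ‖b‖) :=
    InnerProductGeometry.cos_angle a b
  have hcos : Real.cos (2 * π / 3) < Real.cos (InnerProductGeometry.angle a b) := by
    apply Real.cos_lt_cos_of_nonneg_of_le_pi (InnerProductGeometry.angle_nonneg a b)
    · linarith [Real.pi_pos]
    · rw [← hangle_eq]; exact hangle
  have hcosval : Real.cos (2 * π / 3) = -(1/2) := by
    have h23 : (2 : ℝ) * π / 3 = π - π / 3 := by ring
    rw [h23, Real.cos_pi_sub, Real.cos_pi_div_three]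
  have hcuv : c = (inner ℝ a b : ℝ) / (‖a‖ * ‖b‖) := by
    rw [hc_def, hu_def, hv_def, real_inner_smul_left, real_inner_smul_right]
    field_simp
  have hc : -(1/2) < c := by rw [hcuv, ← hcosformula, ← hcosval]; exact hcos
  -- set up quantities
  set s : ℝ := ‖u + v‖ with hs_def
  have hs_sq : s ^ 2 = 2 + 2 * c := by
    rw [hs_def, @norm_add_sq_real, hnu, hnv, hc_def]; ring
  have hs_nonneg : (0 : ℝ) ≤ s := norm_nonneg _
  have hs_gt1 : 1 < s := by nlinarith
  set ε : ℝ := s ^ 2 - s with hε_def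
  have hε : 0 < ε := by nlinarith
  set K : ℝ := s ^ 2 * (1 / (2 * ‖a‖) + 1 / (2 * ‖b‖)) with hK_def
  have hK : 0 < K := by
    have : (0:ℝ) < s ^ 2 := by nlinarith
    positivity
  set t : ℝ := ε / (2 * K) with ht_def
  have ht : 0 < t := by positivity
  set w : EuclideanSpace ℝ (Fin 2) := t • (u + v) with hw_def
  refine ⟨P₁ + w, ?_⟩
  rw [hf, hf]
  -- compute distances
  have hd1 : dist (P₁ + w) P₁ = t * s := by
    rw [dist_eq_norm, add_sub_cancel_left, hw_def, norm_smul, Real.norm_eq_abs,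
      abs_of_pos ht, hs_def]
  have hiaw : (inner ℝ a w : ℝ) / ‖a‖ = t * (1 + c) := by
    rw [hw_def, real_inner_smul_right, inner_add_right]
    have h1 : (inner ℝ a u : ℝ) = ‖a‖ := by
      rw [hu_def, real_inner_smul_right, real_inner_self_eq_norm_sq]
      field_simp
    have h2 : (inner ℝ a v : ℝ) = ‖a‖ * c := by
      rw [hcuv, hv_def, real_inner_smul_right]
      field_simp
    rw [h1, h2]
    field_simp
  have hibw : (inner ℝ b w : ℝ) / ‖b‖ = t * (1 + c) := by
    rw [hw_def, real_inner_smul_right, inner_add_right]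
    have h1 : (inner ℝ b v : ℝ) = ‖b‖ := by
      rw [hv_def, real_inner_smul_right, real_inner_self_eq_norm_sq]
      field_simp
    have h2 : (inner ℝ b u : ℝ) = ‖b‖ * c := by
      rw [hcuv, hu_def, real_inner_smul_right, real_inner_comm]
      field_simp
    rw [h1, h2]
    field_simp
    ring
  have hwsq : ‖w‖ ^ 2 = t ^ 2 * s ^ 2 := by
    rw [hw_def, norm_smul, Real.norm_eq_abs, ← hs_def, mul_pow, sq_abs]
  have hd2 : dist (P₁ + w) P₂ ≤ ‖a‖ - t * (1 + c) + t ^ 2 * s ^ 2 / (2 * ‖a‖) := by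
    have heq : dist (P₁ + w) P₂ = ‖a - w‖ := by
      rw [dist_eq_norm, ha_def, ← norm_neg]
      congr 1
      abel
    rw [heq, ← hiaw, ← hwsq]
    exact norm_sub_le_aux a w ha
  have hd3 : dist (P₁ + w) P₃ ≤ ‖b‖ - t * (1 + c) + t ^ 2 * s ^ 2 / (2 * ‖b‖) := by
    have heq : dist (P₁ + w) P₃ = ‖b - w‖ := by
      rw [dist_eq_norm, hb_def, ← norm_neg]
      congr 1
      abel
    rw [heq, ← hibw, ← hwsq]
    exact norm_sub_le_aux b w hb
  have hP1 : dist P₁ P₁ = 0 := dist_self P₁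
  have hP12 : dist P₁ P₂ = ‖a‖ := by rw [dist_eq_norm, ha_def, ← norm_neg]; congr 1; abel
  have hP13 : dist P₁ P₃ = ‖b‖ := by rw [dist_eq_norm, hb_def, ← norm_neg]; congr 1; abel
  rw [hd1, hP1, hP12, hP13]
  have hkey : t * s - 2 * (t * (1 + c)) + t ^ 2 * s ^ 2 / (2 * ‖a‖)
      + t ^ 2 * s ^ 2 / (2 * ‖b‖) = -t * ε + t ^ 2 * K := by
    rw [hε_def, hK_def, hs_sq]
    field_simp
    ring
  have hfin : -t * ε + t ^ 2 * K < 0 := by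
    have htK : t * K = ε / 2 := by
      rw [ht_def]
      field_simp [ne_of_gt hK]
    nlinarith [mul_pos ht hε]
  clear_value s ε K t
  linarith [hd2, hd3, hkey, hfin]
end
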